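/- arXiv:2407.14444 — 4 statements merged into one kernel-verified Lean document; each statement's English description precedes it below -/
import Mathlib

section
/- Let ω ∈ ℂ with Re ω ≠ 0 and p ≥ 1. If r : ℝ → ℂ is p-almost periodic (r ∈ AP(p)), then G_ω[r] ∈ AP(p) ∩ AAP; if r ∈ AP_0(p), then G_ω[r] ∈ AP_0(p) ∩ AAP_0. -/
open MeasureTheory Filter Topology
open scoped ENNReal NNReal

noncomputable section

/-- Bochner-almost periodic function `ℝ → ℂ`. -/
def AP (f : ℝ → ℂ) : Prop :=
  Continuous f ∧ ∀ b : ℕ → ℝ, ∃ φ : ℕ → ℕ, StrictMono φ ∧ ∃ g : ℝ → ℂ,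
    TendstoUniformly (fun m t => f (t + b (φ m))) g atTop

/-- Bounded continuous. -/
def BCb (f : ℝ → ℂ) : Prop := Continuous f ∧ ∃ C : ℝ, ∀ t, ‖f t‖ ≤ C

def BC0 (f : ℝ → ℂ) : Prop := BCb f ∧ Tendsto f atTop (nhds 0)

def C00 (f : ℝ → ℂ) : Prop := BC0 f ∧ Tendsto f atBot (nhds 0)

def Lp0 (p : ℝ) (f : ℝ → ℂ) : Prop :=
  (∃ C : ℝ, ∀ t ≤ (0:ℝ), ‖f t‖ ≤ C) ∧ (∫⁻ t in Set.Ioi (0:ℝ), (‖f t‖₊ : ℝ≥0∞) ^ p) < ⊤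

def LpR (p : ℝ) (f : ℝ → ℂ) : Prop := (∫⁻ t : ℝ, (‖f t‖₊ : ℝ≥0∞) ^ p) < ⊤

def AAP (f : ℝ → ℂ) : Prop :=
  BCb f ∧ ∃ φ g : ℝ → ℂ, (∀ t, f t = φ t + g t) ∧ AP φ ∧ Tendsto g atTop (nhds 0)

def AAP0 (f : ℝ → ℂ) : Prop :=
  BCb f ∧ ∃ φ g : ℝ → ℂ, (∀ t, f t = φ t + g t) ∧ AP φ ∧
    Tendsto g atTop (nhds 0) ∧ Tendsto g atBot (nhds 0)

def APp (p : ℝ) (f : ℝ → ℂ) : Prop :=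
  BCb f ∧ ∃ φ g : ℝ → ℂ, (∀ t, f t = φ t + g t) ∧ AP φ ∧ Lp0 p g

def APp0 (p : ℝ) (f : ℝ → ℂ) : Prop :=
  BCb f ∧ ∃ φ g : ℝ → ℂ, (∀ t, f t = φ t + g t) ∧ AP φ ∧ LpR p g

/-- The Green kernel `g_ω`. -/
def gker (ω : ℂ) (t s : ℝ) : ℂ :=
  if Real.sign ω.re * (t - s) < 0
  then ((-Real.sign ω.re : ℝ) : ℂ) * Complex.exp (ω * ((t - s : ℝ) : ℂ)) else 0

/-- The Green operator `G_ω`. -/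
def Gop (ω : ℂ) (f : ℝ → ℂ) (t : ℝ) : ℂ := ∫ s : ℝ, gker ω t s * f s

/-- The absolute Green operator `I_ω`, with values in `[0,∞]`. -/
def Iop (ω : ℂ) (f : ℝ → ℂ) (t : ℝ) : ℝ≥0∞ := ∫⁻ s : ℝ, (‖gker ω t s * f s‖₊ : ℝ≥0∞)

def Gam {m : ℕ} (γ : Fin m → ℂ) (j : Fin m) : ℂ := ∏ k ∈ Finset.univ.erase j, (γ j - γ k)

/-- The Green operator for the family γ. -/
def GreenOp {m : ℕ} (γ : Fin m → ℂ) (f : ℝ → ℂ) (t : ℝ) : ℂ :=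
  ∑ j, (Gam γ j)⁻¹ * Gop (γ j) f t

def Dpoly {m : ℕ} (γ : Fin m → ℂ) : Polynomial ℂ := ∏ j, (Polynomial.X - Polynomial.C (γ j))

/-- The differential operator with characteristic polynomial `∏ (x - γ j)`. -/
def Dop {m : ℕ} (γ : Fin m → ℂ) (z : ℝ → ℂ) (t : ℝ) : ℂ :=
  ∑ k ∈ Finset.range (m + 1), (Dpoly γ).coeff k * iteratedDeriv k z t

def APm (m : ℕ) (F : ℝ → (Fin m → ℂ) → ℂ) : Prop :=
  Continuous (fun p : ℝ × (Fin m → ℂ) => F p.1 p.2) ∧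
  ∀ b : ℕ → ℝ, ∃ φ : ℕ → ℕ, StrictMono φ ∧ ∃ G : ℝ → (Fin m → ℂ) → ℂ,
    ∀ K : Set (Fin m → ℂ), IsCompact K →
      TendstoUniformlyOn (fun k (p : ℝ × (Fin m → ℂ)) => F (p.1 + b (φ k)) p.2)
        (fun p => G p.1 p.2) atTop (Set.univ ×ˢ K)

def DecayTop (m : ℕ) (h : ℝ → (Fin m → ℂ) → ℂ) : Prop :=
  ∀ K : Set (Fin m → ℂ), IsCompact K →
    TendstoUniformlyOn (fun t x => h t x) 0 atTop K

def DecayBot (m : ℕ) (h : ℝ → (Fin m → ℂ) → ℂ) : Prop :=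
  ∀ K : Set (Fin m → ℂ), IsCompact K →
    TendstoUniformlyOn (fun t x => h t x) 0 atBot K

def AAPm (m : ℕ) (F : ℝ → (Fin m → ℂ) → ℂ) : Prop :=
  Continuous (fun p : ℝ × (Fin m → ℂ) => F p.1 p.2) ∧ (∃ C : ℝ, ∀ t x, ‖F t x‖ ≤ C) ∧
  ∃ Φ h : ℝ → (Fin m → ℂ) → ℂ, (∀ t x, F t x = Φ t x + h t x) ∧ APm m Φ ∧ DecayTop m h

def AAP0m (m : ℕ) (F : ℝ → (Fin m → ℂ) → ℂ) : Prop :=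
  Continuous (fun p : ℝ × (Fin m → ℂ) => F p.1 p.2) ∧ (∃ C : ℝ, ∀ t x, ‖F t x‖ ≤ C) ∧
  ∃ Φ h : ℝ → (Fin m → ℂ) → ℂ, (∀ t x, F t x = Φ t x + h t x) ∧ APm m Φ ∧
    DecayTop m h ∧ DecayBot m h

/-- Complete Bell polynomials. -/
def Bell : ℕ → (ℕ → ℂ) → ℂ
  | 0, _ => 1
  | (i+1), x => ∑ j ∈ Finset.range (i+1), (Nat.choose i j : ℂ) * Bell (i - j) x * x (j+1)
decreasing_by exact Nat.lt_succ_of_le (Nat.sub_le i j)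

/-- `f_i(x_1,…,x_i) = B_{i+1}(x_1,…,x_i,0)`. -/
def fBell (i : ℕ) (x : ℕ → ℂ) : ℂ := Bell (i+1) (fun k => if k = i+1 then 0 else x k)

def Pa (n : ℕ) (a : ℕ → ℂ) : Polynomial ℂ :=
  Polynomial.X ^ n + ∑ i ∈ Finset.range n, Polynomial.C (a i) * Polynomial.X ^ i

def Prl (n : ℕ) (r : ℕ → ℝ → ℂ) (lam : ℂ) (t : ℝ) : ℂ :=
  ∑ k ∈ Finset.range n, lam ^ k * r k t

/-- `(d^k/dλ^k) P(r(t);λ)`. -/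
def PrlD (n k : ℕ) (r : ℕ → ℝ → ℂ) (lam : ℂ) (t : ℝ) : ℂ :=
  (Nat.factorial k : ℂ) * ∑ i ∈ Finset.range n, (Nat.choose i k : ℂ) * lam ^ (i - k) * r i t

def DopP (n : ℕ) (a : ℕ → ℂ) (lam : ℂ) (z : ℝ → ℂ) (t : ℝ) : ℂ :=
  ∑ j ∈ Finset.Icc 1 n, ((Nat.factorial j : ℂ))⁻¹ *
    Polynomial.eval lam (Polynomial.derivative^[j] (Pa n a)) * iteratedDeriv (j-1) z t

def Lterm (n : ℕ) (r : ℕ → ℝ → ℂ) (lam : ℂ) (z : ℝ → ℂ) (t : ℝ) : ℂ :=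
  ∑ k ∈ Finset.Icc 1 (n-1), ((Nat.factorial k : ℂ))⁻¹ * PrlD n k r lam t * iteratedDeriv (k-1) z t

def Fterm (n : ℕ) (a : ℕ → ℂ) (r : ℕ → ℝ → ℂ) (lam : ℂ) (z : ℝ → ℂ) (t : ℝ) : ℂ :=
  ∑ i ∈ Finset.Icc 2 n, ∑ j ∈ Finset.range (n - i + 1),
    (Nat.choose (i+j) j : ℂ) * (a (i+j) + r (i+j) t) * lam ^ j *
      fBell (i-1) (fun k => iteratedDeriv (k-1) z t)

def aT (n : ℕ) {m : ℕ} (γ : Fin m → ℂ) (j : Fin m) : ℝ :=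
  ∑ i ∈ Finset.range (n-1), ‖γ j‖ ^ i

def Lconst (n : ℕ) (γ : Fin (n-1) → ℂ) (r : ℕ → ℝ → ℂ) (lam : ℂ) (β : ℝ) : ℝ≥0∞ :=
  ∑ j, ∑ k ∈ Finset.Icc 1 (n-1),
    ENNReal.ofReal (aT n γ j / (‖Gam γ j‖ * (Nat.factorial k))) *
      ⨆ t : ℝ, Iop (((γ j).re - Real.sign (γ j).re * β : ℝ) : ℂ) (PrlD n k r lam) t

def Qconst (n : ℕ) (γ : Fin (n-1) → ℂ) (a : ℕ → ℂ) (r : ℕ → ℝ → ℂ) (lam : ℂ) (β : ℝ) : ℝ≥0∞ :=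
  ∑ j, ∑ i ∈ Finset.Icc 2 n, ∑ k ∈ Finset.range (i-1),
    ENNReal.ofReal (aT n γ j / ‖Gam γ j‖ * (Nat.choose i k) * ‖lam‖ ^ k) *
      (ENNReal.ofReal (‖a i‖ / |(γ j).re - Real.sign (γ j).re * β|) +
        ⨆ t : ℝ, Iop (((γ j).re - Real.sign (γ j).re * β : ℝ) : ℂ) (r i) t)

def mConst (n : ℕ) (δ : ℝ) : ℝ :=
  sSup { q : ℝ | ∃ i ∈ Finset.Icc 1 (n-1), ∃ X Y : ℕ → ℂ,
    (∑ k ∈ Finset.Icc 1 i, ‖X k‖) ≤ δ ∧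
    (∑ k ∈ Finset.Icc 1 i, ‖Y k‖) ≤ δ ∧
    (∑ k ∈ Finset.Icc 1 i, ‖X k - Y k‖) ≠ 0 ∧
    q = ‖fBell i X - fBell i Y‖ / ∑ k ∈ Finset.Icc 1 i, ‖X k - Y k‖ }



lemma gker_norm_le {ω : ℂ} (hω : ω.re ≠ 0) (t s : ℝ) :
    ‖gker ω t s‖ ≤ Real.exp (-|ω.re| * |t - s|) := by
  unfold gker
  split_ifs with h
  · rw [norm_mul, Complex.norm_real, Real.norm_eq_abs, abs_neg,
      Complex.norm_exp]
    have hre : (ω * ((t - s : ℝ) : ℂ)).re = ω.re * (t - s) := by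
      simp [Complex.mul_re]
    rw [hre]
    rcases hω.lt_or_gt with hneg | hpos
    · rw [Real.sign_of_neg hneg] at h ⊢
      have hts : 0 < t - s := by nlinarith
      rw [abs_neg, abs_one, one_mul, abs_of_pos hts, abs_of_neg hneg]
      apply le_of_eq; ring_nf
    · rw [Real.sign_of_pos hpos] at h ⊢
      have hts : t - s < 0 := by nlinarith
      rw [abs_one, one_mul, abs_of_neg hts, abs_of_pos hpos]
      apply le_of_eq; ring_nf
  · rw [norm_zero]; positivity

lemma gker_norm_le_one {ω : ℂ} (hω : ω.re ≠ 0) (t s : ℝ) : ‖gker ω t s‖ ≤ 1 := by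
  refine (gker_norm_le hω t s).trans ?_
  rw [Real.exp_le_one_iff]
  have : 0 ≤ |ω.re| * |t - s| := by positivity
  linarith

lemma gker_meas (ω : ℂ) : Measurable (fun q : ℝ × ℝ => gker ω q.1 q.2) := by
  unfold gker
  apply Measurable.ite
  · exact measurableSet_lt (by measurability) measurable_const
  · measurability
  · measurability

lemma gker_meas1 (ω : ℂ) (t : ℝ) : Measurable (fun s : ℝ => gker ω t s) :=
  (gker_meas ω).comp (measurable_const.prodMk measurable_id)

lemma integrable_exp_negabs {a : ℝ} (ha : 0 < a) :
    Integrable (fun x : ℝ => Real.exp (-a * |x|)) := by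
  rw [← integrableOn_univ, ← Set.Iic_union_Ioi (a := (0:ℝ))]
  apply IntegrableOn.union
  · refine ((integrableOn_exp_mul_Iic ha 0).congr_fun (fun x hx => ?_) measurableSet_Iic)
    rw [Set.mem_Iic] at hx
    rw [abs_of_nonpos hx]; ring_nf
  · refine ((exp_neg_integrableOn_Ioi 0 ha).congr_fun (fun x hx => ?_) measurableSet_Ioi)
    rw [Set.mem_Ioi] at hx
    rw [abs_of_pos hx]

lemma integrable_expabs_shift {a : ℝ} (ha : 0 < a) (t : ℝ) :
    Integrable (fun s : ℝ => Real.exp (-a * |t - s|)) :=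
  (integrable_exp_negabs ha).comp_sub_left t

lemma integrable_ker_mul {ω : ℂ} (hω : ω.re ≠ 0) {f : ℝ → ℂ}
    (hf : AEStronglyMeasurable f volume) {C : ℝ} (hC : ∀ s, ‖f s‖ ≤ C) (t : ℝ) :
    Integrable (fun s => gker ω t s * f s) := by
  have ha : 0 < |ω.re| := abs_pos.2 hω
  apply Integrable.mono' ((integrable_expabs_shift ha t).mul_const C)
  · exact (gker_meas1 ω t).aestronglyMeasurable.mul hf
  · refine Filter.Eventually.of_forall fun s => ?_
    rw [norm_mul]
    exact mul_le_mul (gker_norm_le hω t s) (hC s)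
      (norm_nonneg _) (Real.exp_nonneg _)

/-- The total mass constant. -/
def M0 (a : ℝ) : ℝ := ∫ x : ℝ, Real.exp (-a * |x|)

lemma M0_nonneg (a : ℝ) : 0 ≤ M0 a :=
  integral_nonneg fun x => Real.exp_nonneg _

lemma integral_expabs_shift {a : ℝ} (t : ℝ) :
    ∫ s : ℝ, Real.exp (-a * |t - s|) = M0 a :=
  integral_sub_left_eq_self (fun x : ℝ => Real.exp (-a * |x|)) volume t

lemma norm_integral_ker_le {ω : ℂ} (hω : ω.re ≠ 0) {h : ℝ → ℂ}
    (hm : AEStronglyMeasurable h volume) {D : ℝ} (hD : ∀ s, ‖h s‖ ≤ D) (t : ℝ) :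
    ‖∫ s, gker ω t s * h s‖ ≤ M0 |ω.re| * D := by
  have ha : 0 < |ω.re| := abs_pos.2 hω
  have h1 : ‖∫ s, gker ω t s * h s‖ ≤ ∫ s, Real.exp (-|ω.re| * |t - s|) * D := by
    apply norm_integral_le_of_norm_le ((integrable_expabs_shift ha t).mul_const D)
    refine Filter.Eventually.of_forall fun s => ?_
    rw [norm_mul]
    exact mul_le_mul (gker_norm_le hω t s) (hD s) (norm_nonneg _) (Real.exp_nonneg _)
  rwa [integral_mul_const, integral_expabs_shift] at h1

lemma gker_shift (ω : ℂ) (b t s : ℝ) : gker ω (t + b) (s + b) = gker ω t s := by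
  have h : t + b - (s + b) = t - s := by ring
  unfold gker
  rw [h]

lemma Gop_translate (ω : ℂ) (f : ℝ → ℂ) (t b : ℝ) :
    Gop ω f (t + b) = Gop ω (fun s => f (s + b)) t := by
  unfold Gop
  rw [← integral_add_right_eq_self (fun s => gker ω (t + b) s * f s) b]
  simp only [gker_shift]

lemma Gop_continuous {ω : ℂ} (hω : ω.re ≠ 0) {f : ℝ → ℂ} (hf : Continuous f)
    {C : ℝ} (hC : ∀ s, ‖f s‖ ≤ C) : Continuous (Gop ω f) := by
  have ha : 0 < |ω.re| := abs_pos.2 hω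
  have hc : 0 ≤ C := le_trans (norm_nonneg _) (hC 0)
  have key : ∀ t, Gop ω f t = ∫ s, gker ω 0 s * f (s + t) := by
    intro t
    have := Gop_translate ω f 0 t
    rw [zero_add] at this
    rw [this]; rfl
  rw [funext key]
  apply continuous_of_dominated (bound := fun s => Real.exp (-|ω.re| * |(0:ℝ) - s|) * C)
  · intro t
    exact (gker_meas1 ω 0).aestronglyMeasurable.mul
      ((hf.comp (continuous_id.add continuous_const)).aestronglyMeasurable)
  · intro t
    refine Filter.Eventually.of_forall fun s => ?_
    rw [norm_mul]
    exact mul_le_mul (gker_norm_le hω 0 s) (hC _) (norm_nonneg _) (Real.exp_nonneg _)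
  · exact (integrable_expabs_shift ha 0).mul_const C
  · refine Filter.Eventually.of_forall fun s => ?_
    exact continuous_const.mul (hf.comp (continuous_const.add continuous_id))

lemma Gop_add {ω : ℂ} (hω : ω.re ≠ 0) {r φ g : ℝ → ℂ}
    (hr : ∀ t, r t = φ t + g t)
    (hφm : AEStronglyMeasurable φ volume) {C1 : ℝ} (hC1 : ∀ s, ‖φ s‖ ≤ C1)
    (hgm : AEStronglyMeasurable g volume) {C2 : ℝ} (hC2 : ∀ s, ‖g s‖ ≤ C2) (t : ℝ) :
    Gop ω r t = Gop ω φ t + Gop ω g t := by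
  unfold Gop
  rw [show (fun s => gker ω t s * r s)
      = fun s => gker ω t s * φ s + gker ω t s * g s by
    funext s; rw [hr s, mul_add]]
  exact integral_add (integrable_ker_mul hω hφm hC1 t) (integrable_ker_mul hω hgm hC2 t)

lemma AP_bounded {f : ℝ → ℂ} (hf : AP f) : ∃ C, ∀ t, ‖f t‖ ≤ C := by
  by_contra h
  push_neg at h
  choose b hb using fun n : ℕ => h n
  obtain ⟨φ, hφ, g, hg⟩ := hf.2 b
  have h0 : Tendsto (fun m => f (0 + b (φ m))) atTop (𝓝 (g 0)) := hg.tendsto_at 0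
  have h1 : Tendsto (fun m => ‖f ((0:ℝ) + b (φ m))‖) atTop atTop := by
    apply tendsto_atTop_mono (fun m => ?_)
      (tendsto_natCast_atTop_atTop.comp hφ.tendsto_atTop)
    simp only [Function.comp_apply, zero_add]
    exact (hb (φ m)).le
  exact not_tendsto_atTop_of_tendsto_nhds h0.norm h1

lemma Gop_AP {ω : ℂ} (hω : ω.re ≠ 0) {f : ℝ → ℂ} (hf : AP f) : AP (Gop ω f) := by
  obtain ⟨C, hC⟩ := AP_bounded hf
  have hcont := hf.1
  refine ⟨Gop_continuous hω hcont hC, fun b => ?_⟩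
  obtain ⟨φ, hφ, g, hg⟩ := hf.2 b
  refine ⟨φ, hφ, Gop ω g, ?_⟩
  have hgc : Continuous g :=
    hg.continuous (Eventually.of_forall fun m =>
      hcont.comp (continuous_id.add continuous_const)).frequently
  have hgC : ∀ t, ‖g t‖ ≤ C := fun t =>
    le_of_tendsto (hg.tendsto_at t).norm (Eventually.of_forall fun m => hC _)
  set M := M0 |ω.re| with hMdef
  have hM : 0 ≤ M := M0_nonneg _
  rw [Metric.tendstoUniformly_iff] at hg ⊢
  intro ε hε
  have hε' : 0 < ε / (M + 1) := div_pos hε (by linarith)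
  filter_upwards [hg (ε / (M + 1)) hε'] with m hm t
  rw [Gop_translate, dist_eq_norm]
  have hfm : AEStronglyMeasurable (fun s : ℝ => f (s + b (φ m))) volume :=
    (hcont.comp (continuous_id.add continuous_const)).aestronglyMeasurable
  have hfmC : ∀ s : ℝ, ‖f (s + b (φ m))‖ ≤ C := fun s => hC _
  have hsub : Gop ω g t - Gop ω (fun s => f (s + b (φ m))) t
      = ∫ s, gker ω t s * (g s - f (s + b (φ m))) := by
    unfold Gop
    rw [← integral_sub (integrable_ker_mul hω hgc.aestronglyMeasurable hgC t)
      (integrable_ker_mul hω hfm hfmC t)]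
    congr 1; funext s; ring
  rw [hsub]
  have hbound : ∀ s : ℝ, ‖g s - f (s + b (φ m))‖ ≤ ε / (M + 1) := by
    intro s
    have := hm s
    rw [dist_eq_norm] at this
    exact this.le
  have := norm_integral_ker_le hω
    ((hgc.sub (hcont.comp (continuous_id.add continuous_const))).aestronglyMeasurable)
    hbound t
  refine lt_of_le_of_lt this ?_
  rw [div_eq_mul_inv]
  have hM1 : (0:ℝ) < M + 1 := by linarith
  rw [show M * (ε * (M + 1)⁻¹) = ε * (M * (M + 1)⁻¹) by ring]
  have : M * (M + 1)⁻¹ < 1 := by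
    rw [mul_inv_lt_iff₀ hM1]; linarith
  nlinarith

lemma nnorm_gker_le {ω : ℂ} (hω : ω.re ≠ 0) (t s : ℝ) :
    (‖gker ω t s‖₊ : ℝ≥0∞) ≤ ENNReal.ofReal (Real.exp (-|ω.re| * |t - s|)) := by
  rw [← enorm_eq_nnnorm, ← ofReal_norm]
  exact ENNReal.ofReal_le_ofReal (gker_norm_le hω t s)

lemma nnorm_gker_le_one {ω : ℂ} (hω : ω.re ≠ 0) (t s : ℝ) :
    (‖gker ω t s‖₊ : ℝ≥0∞) ≤ 1 := by
  rw [← enorm_eq_nnnorm, ← ofReal_norm, ← ENNReal.ofReal_one]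
  exact ENNReal.ofReal_le_ofReal (gker_norm_le_one hω t s)

lemma lint_expabs {a : ℝ} (ha : 0 < a) (c : ℝ) :
    ∫⁻ s : ℝ, ENNReal.ofReal (Real.exp (-a * |c - s|)) = ENNReal.ofReal (M0 a) := by
  rw [← ofReal_integral_eq_lintegral_ofReal (integrable_expabs_shift ha c)
    (Filter.Eventually.of_forall fun s => Real.exp_nonneg _), integral_expabs_shift]

lemma lint_expabs_set {a : ℝ} (ha : 0 < a) (c : ℝ) (S : Set ℝ) :
    ∫⁻ s in S, ENNReal.ofReal (Real.exp (-a * |c - s|)) ≤ ENNReal.ofReal (M0 a) :=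
  le_trans (setLIntegral_le_lintegral _ _) (lint_expabs ha c).le

lemma K_factor {ω : ℂ} (hω : ω.re ≠ 0) {t s B : ℝ} (h : |t - B| + |B - s| = |t - s|) :
    (‖gker ω t s‖₊ : ℝ≥0∞)
      ≤ ENNReal.ofReal (Real.exp (-|ω.re| * |t - B|)) *
        ENNReal.ofReal (Real.exp (-|ω.re| * |B - s|)) := by
  refine le_trans (nnorm_gker_le hω t s) ?_
  rw [← ENNReal.ofReal_mul (Real.exp_nonneg _), ← Real.exp_add]
  apply ENNReal.ofReal_le_ofReal
  apply Real.exp_le_exp.2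
  rw [← h]; apply le_of_eq; ring
  
lemma lint_ker_le {ω : ℂ} (hω : ω.re ≠ 0) (t : ℝ) :
    ∫⁻ s, (‖gker ω t s‖₊ : ℝ≥0∞) ≤ ENNReal.ofReal (M0 |ω.re|) := by
  have ha : 0 < |ω.re| := abs_pos.2 hω
  refine le_trans (lintegral_mono fun s => nnorm_gker_le hω t s) ?_
  exact (lint_expabs ha t).le

lemma lint_ker_Iic {ω : ℂ} (hω : ω.re ≠ 0) {B t : ℝ} (hBt : B ≤ t) :
    ∫⁻ s in Set.Iic B, (‖gker ω t s‖₊ : ℝ≥0∞)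
      ≤ ENNReal.ofReal (Real.exp (-|ω.re| * (t - B))) * ENNReal.ofReal (M0 |ω.re|) := by
  have ha : 0 < |ω.re| := abs_pos.2 hω
  have step1 : ∫⁻ s in Set.Iic B, (‖gker ω t s‖₊ : ℝ≥0∞)
      ≤ ∫⁻ s in Set.Iic B, ENNReal.ofReal (Real.exp (-|ω.re| * (t - B))) *
          ENNReal.ofReal (Real.exp (-|ω.re| * |B - s|)) := by
    refine setLIntegral_mono' measurableSet_Iic fun s hs => ?_
    rw [Set.mem_Iic] at hs
    have habs : |t - B| + |B - s| = |t - s| := by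
      rw [abs_of_nonneg (by linarith), abs_of_nonneg (by linarith),
        abs_of_nonneg (by linarith)]
      ring
    have := K_factor hω habs
    rwa [abs_of_nonneg (by linarith : (0:ℝ) ≤ t - B)] at this
  refine step1.trans ?_
  rw [lintegral_const_mul]
  · exact mul_le_mul_right (lint_expabs_set ha B _) _
  · exact ENNReal.measurable_ofReal.comp
      ((Real.continuous_exp.comp (by continuity)).measurable)

lemma lint_ker_Ici {ω : ℂ} (hω : ω.re ≠ 0) {B t : ℝ} (htB : t ≤ B) :
    ∫⁻ s in Set.Ici B, (‖gker ω t s‖₊ : ℝ≥0∞)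
      ≤ ENNReal.ofReal (Real.exp (-|ω.re| * (B - t))) * ENNReal.ofReal (M0 |ω.re|) := by
  have ha : 0 < |ω.re| := abs_pos.2 hω
  have step1 : ∫⁻ s in Set.Ici B, (‖gker ω t s‖₊ : ℝ≥0∞)
      ≤ ∫⁻ s in Set.Ici B, ENNReal.ofReal (Real.exp (-|ω.re| * (B - t))) *
          ENNReal.ofReal (Real.exp (-|ω.re| * |B - s|)) := by
    refine setLIntegral_mono' measurableSet_Ici fun s hs => ?_
    rw [Set.mem_Ici] at hs
    have habs : |t - B| + |B - s| = |t - s| := by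
      rw [abs_of_nonpos (by linarith), abs_of_nonpos (by linarith),
        abs_of_nonpos (by linarith)]
      ring
    have := K_factor hω habs
    rwa [abs_of_nonpos (by linarith : t - B ≤ (0:ℝ)), neg_sub] at this
  refine step1.trans ?_
  rw [lintegral_const_mul]
  · exact mul_le_mul_right (lint_expabs_set ha B _) _
  · exact (ENNReal.measurable_ofReal.comp
      ((Real.continuous_exp.comp (by continuity)).measurable))

-- t-variable versions
lemma lint_ker_t_le {ω : ℂ} (hω : ω.re ≠ 0) (s : ℝ) :
    ∫⁻ t, (‖gker ω t s‖₊ : ℝ≥0∞) ≤ ENNReal.ofReal (M0 |ω.re|) := by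
  have ha : 0 < |ω.re| := abs_pos.2 hω
  refine le_trans (lintegral_mono fun t => ?_) (lint_expabs ha s).le
  refine le_trans (nnorm_gker_le hω t s) ?_
  rw [abs_sub_comm]
lemma lint_ker_t_Ioi {ω : ℂ} (hω : ω.re ≠ 0) {s : ℝ} (hs : s ≤ 0) :
    ∫⁻ t in Set.Ioi (0:ℝ), (‖gker ω t s‖₊ : ℝ≥0∞)
      ≤ ENNReal.ofReal (Real.exp (-|ω.re| * (-s))) * ENNReal.ofReal (M0 |ω.re|) := by
  have ha : 0 < |ω.re| := abs_pos.2 hω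
  have step1 : ∫⁻ t in Set.Ioi (0:ℝ), (‖gker ω t s‖₊ : ℝ≥0∞)
      ≤ ∫⁻ t in Set.Ioi (0:ℝ), ENNReal.ofReal (Real.exp (-|ω.re| * (-s))) *
          ENNReal.ofReal (Real.exp (-|ω.re| * |t - 0|)) := by
    refine setLIntegral_mono' measurableSet_Ioi fun t ht => ?_
    rw [Set.mem_Ioi] at ht
    have habs : |t - 0| + |0 - s| = |t - s| := by
      rw [abs_of_nonneg (by linarith), abs_of_nonneg (by linarith),
        abs_of_nonneg (by linarith)]
      ring
    have := K_factor hω habs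
    rw [abs_of_nonneg (by linarith : (0:ℝ) ≤ 0 - s)] at this
    refine this.trans ?_
    rw [mul_comm, show (0:ℝ) - s = -s by ring]
  refine step1.trans ?_
  rw [lintegral_const_mul]
  · refine mul_le_mul_right ?_ _
    refine le_trans (setLIntegral_le_lintegral _ _) ?_
    refine le_trans (le_of_eq ?_) (lint_expabs ha 0).le
    congr 1; funext t; rw [abs_sub_comm]
  · exact (ENNReal.measurable_ofReal.comp
      ((Real.continuous_exp.comp (by continuity)).measurable))

lemma hold_aux {p : ℝ} (hp : 1 < p) (μ : Measure ℝ) {k f : ℝ → ℝ≥0∞}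
    (hk : AEMeasurable k μ) (hf : AEMeasurable f μ) :
    ∫⁻ s, k s * f s ∂μ
      ≤ (∫⁻ s, k s ∂μ) ^ (1 - 1/p) * (∫⁻ s, k s * (f s) ^ p ∂μ) ^ (1/p) := by
  set q : ℝ := p / (p - 1) with hqdef
  have hp0 : (0:ℝ) < p := by linarith
  have hq0 : (0:ℝ) < q := div_pos hp0 (by linarith)
  have hpq : q.HolderConjugate p := (Real.HolderConjugate.conjExponent hp).symm
  have hq1 : 1 - 1/p = 1/q := by
    rw [hqdef]
    field_simp
  have hF : AEMeasurable (fun s => k s ^ (1/q)) μ := hk.pow_const _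
  have hG : AEMeasurable (fun s => k s ^ (1/p) * f s) μ := (hk.pow_const _).mul hf
  have key := ENNReal.lintegral_mul_le_Lp_mul_Lq μ hpq hF hG
  have e1 : ∀ s, k s ^ (1/q) * (k s ^ (1/p) * f s) = k s * f s := by
    intro s
    rw [← mul_assoc, ← ENNReal.rpow_add_of_nonneg _ _ (by positivity) (by positivity)]
    rw [show 1/q + 1/p = 1 by
      rw [one_div, one_div]; exact hpq.inv_add_inv_eq_one, ENNReal.rpow_one]
  have e2 : ∀ s, (k s ^ (1/q)) ^ q = k s := by
    intro s
    rw [← ENNReal.rpow_mul, one_div, inv_mul_cancel₀ hq0.ne', ENNReal.rpow_one]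
  have e3 : ∀ s, (k s ^ (1/p) * f s) ^ p = k s * f s ^ p := by
    intro s
    rw [ENNReal.mul_rpow_of_nonneg _ _ hp0.le, ← ENNReal.rpow_mul, one_div,
      inv_mul_cancel₀ hp0.ne', ENNReal.rpow_one]
  simp only [Pi.mul_apply, e1, e2, e3] at key
  rw [hq1]
  exact key

lemma hold {p : ℝ} (hp : 1 ≤ p) (μ : Measure ℝ) {k f : ℝ → ℝ≥0∞}
    (hk : AEMeasurable k μ) (hf : AEMeasurable f μ) :
    ∫⁻ s, k s * f s ∂μ
      ≤ (∫⁻ s, k s ∂μ) ^ (1 - 1/p) * (∫⁻ s, k s * (f s) ^ p ∂μ) ^ (1/p) := by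
  rcases eq_or_lt_of_le hp with h1 | h1
  · simp only [← h1]
    norm_num
  · exact hold_aux h1 μ hk hf

lemma pow_lintegral_mul_le {p : ℝ} (hp : 1 ≤ p) (μ : Measure ℝ) {k f : ℝ → ℝ≥0∞}
    (hk : AEMeasurable k μ) (hf : AEMeasurable f μ) {M : ℝ≥0∞}
    (hM : ∫⁻ s, k s ∂μ ≤ M) :
    (∫⁻ s, k s * f s ∂μ) ^ p ≤ M ^ (p - 1) * ∫⁻ s, k s * (f s) ^ p ∂μ := by
  have hp0 : (0:ℝ) < p := by linarith
  calc (∫⁻ s, k s * f s ∂μ) ^ p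
      ≤ ((∫⁻ s, k s ∂μ) ^ (1 - 1/p) * (∫⁻ s, k s * (f s) ^ p ∂μ) ^ (1/p)) ^ p :=
        ENNReal.rpow_le_rpow (hold hp μ hk hf) hp0.le
    _ = (∫⁻ s, k s ∂μ) ^ ((1 - 1/p) * p) * (∫⁻ s, k s * (f s) ^ p ∂μ) ^ ((1/p) * p) := by
        rw [ENNReal.mul_rpow_of_nonneg _ _ hp0.le, ← ENNReal.rpow_mul, ← ENNReal.rpow_mul]
    _ = (∫⁻ s, k s ∂μ) ^ (p - 1) * (∫⁻ s, k s * (f s) ^ p ∂μ) := by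
        rw [show (1 - 1/p) * p = p - 1 by field_simp,
          show (1/p) * p = 1 by field_simp, ENNReal.rpow_one]
    _ ≤ M ^ (p - 1) * ∫⁻ s, k s * (f s) ^ p ∂μ := by
        exact mul_le_mul_left (ENNReal.rpow_le_rpow hM (by linarith)) _

lemma tail_top {f : ℝ → ℝ≥0∞} (hf : Measurable f)
    (hfin : (∫⁻ t in Set.Ioi (0:ℝ), f t) < ⊤) {δ : ℝ≥0∞} (hδ : 0 < δ) :
    ∃ B : ℝ, 0 ≤ B ∧ (∫⁻ t in Set.Ioi B, f t) ≤ δ := by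
  set μ' := (volume : Measure ℝ).withDensity f with hμ'
  have happ : ∀ B : ℝ, μ' (Set.Ioi B) = ∫⁻ t in Set.Ioi B, f t := fun B =>
    withDensity_apply f measurableSet_Ioi
  have htend : Tendsto (fun n : ℕ => μ' (Set.Ioi (n : ℝ))) atTop
      (𝓝 (μ' (⋂ n : ℕ, Set.Ioi (n : ℝ)))) := by
    apply tendsto_measure_iInter_atTop
      (fun n => measurableSet_Ioi.nullMeasurableSet)
      (fun m n hmn => Set.Ioi_subset_Ioi (Nat.cast_le.2 hmn))
    exact ⟨0, by rw [Nat.cast_zero, happ]; exact hfin.ne⟩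
  have hempty : (⋂ n : ℕ, Set.Ioi ((n : ℕ) : ℝ)) = ∅ := by
    ext x
    simp only [Set.mem_iInter, Set.mem_Ioi, Set.mem_empty_iff_false, iff_false, not_forall,
      not_lt]
    obtain ⟨n, hn⟩ := exists_nat_ge x
    exact ⟨n, hn⟩
  rw [hempty, measure_empty] at htend
  rw [ENNReal.tendsto_atTop_zero] at htend
  obtain ⟨N, hN⟩ := htend δ hδ
  refine ⟨N, Nat.cast_nonneg N, ?_⟩
  rw [← happ]
  exact hN N le_rfl

lemma tail_bot {f : ℝ → ℝ≥0∞} (hf : Measurable f)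
    (hfin : (∫⁻ t, f t) < ⊤) {δ : ℝ≥0∞} (hδ : 0 < δ) :
    ∃ B : ℝ, B ≤ 0 ∧ (∫⁻ t in Set.Iio B, f t) ≤ δ := by
  set μ' := (volume : Measure ℝ).withDensity f with hμ'
  have happ : ∀ B : ℝ, μ' (Set.Iio B) = ∫⁻ t in Set.Iio B, f t := fun B =>
    withDensity_apply f measurableSet_Iio
  have htend : Tendsto (fun n : ℕ => μ' (Set.Iio (-(n : ℝ)))) atTop
      (𝓝 (μ' (⋂ n : ℕ, Set.Iio (-(n : ℝ))))) := by
    apply tendsto_measure_iInter_atTop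
      (fun n => measurableSet_Iio.nullMeasurableSet)
      (fun m n hmn => Set.Iio_subset_Iio (neg_le_neg (Nat.cast_le.2 hmn)))
    refine ⟨0, ?_⟩
    rw [happ]
    exact ((setLIntegral_le_lintegral _ _).trans_lt hfin).ne
  have hempty : (⋂ n : ℕ, Set.Iio (-((n : ℕ) : ℝ))) = ∅ := by
    ext x
    simp only [Set.mem_iInter, Set.mem_Iio, Set.mem_empty_iff_false, iff_false, not_forall,
      not_lt]
    obtain ⟨n, hn⟩ := exists_nat_ge (-x)
    exact ⟨n, by linarith⟩
  rw [hempty, measure_empty] at htend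
  rw [ENNReal.tendsto_atTop_zero] at htend
  obtain ⟨N, hN⟩ := htend δ hδ
  refine ⟨-(N : ℝ), neg_nonpos.2 (Nat.cast_nonneg N), ?_⟩
  rw [← happ]
  exact hN N le_rfl

lemma nnorm_Gop_le (ω : ℂ) (g : ℝ → ℂ) (t : ℝ) :
    (‖Gop ω g t‖₊ : ℝ≥0∞) ≤ ∫⁻ s, (‖gker ω t s‖₊ : ℝ≥0∞) * ‖g s‖₊ := by
  refine le_trans (enorm_integral_le_lintegral_enorm _) (le_of_eq ?_)
  congr 1; funext s
  simp only [enorm_eq_nnnorm]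
  rw [nnnorm_mul, ENNReal.coe_mul]

lemma gker_meas2 (ω : ℂ) (s : ℝ) : Measurable (fun t : ℝ => gker ω t s) :=
  (gker_meas ω).comp (measurable_id.prodMk measurable_const)

lemma Gop_lint_pow_le {ω : ℂ} (hω : ω.re ≠ 0) {p : ℝ} (hp : 1 ≤ p) {g : ℝ → ℂ}
    (hgc : Continuous g) (S : Set ℝ) :
    (∫⁻ t in S, (‖Gop ω g t‖₊ : ℝ≥0∞) ^ p)
      ≤ ENNReal.ofReal (M0 |ω.re|) ^ (p - 1) *
        ∫⁻ s, (‖g s‖₊ : ℝ≥0∞) ^ p * (∫⁻ t in S, (‖gker ω t s‖₊ : ℝ≥0∞)) := by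
  set J := ENNReal.ofReal (M0 |ω.re|) with hJ
  have hJtop : J ^ (p - 1) ≠ ⊤ :=
    (ENNReal.rpow_lt_top_of_nonneg (by linarith) ENNReal.ofReal_ne_top).ne
  have hKmeas : Measurable (fun q : ℝ × ℝ =>
      (‖gker ω q.1 q.2‖₊ : ℝ≥0∞) * (‖g q.2‖₊ : ℝ≥0∞) ^ p) :=
    (gker_meas ω).enorm.mul
      (((hgc.measurable.enorm.pow_const p).comp measurable_snd))
  have hpt : ∀ t, (‖Gop ω g t‖₊ : ℝ≥0∞) ^ p
      ≤ J ^ (p - 1) * ∫⁻ s, (‖gker ω t s‖₊ : ℝ≥0∞) * (‖g s‖₊ : ℝ≥0∞) ^ p := by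
    intro t
    refine le_trans (ENNReal.rpow_le_rpow (nnorm_Gop_le ω g t) (by linarith : (0:ℝ) ≤ p)) ?_
    exact pow_lintegral_mul_le hp volume (gker_meas1 ω t).enorm.aemeasurable
      hgc.measurable.enorm.aemeasurable (lint_ker_le hω t)
  calc (∫⁻ t in S, (‖Gop ω g t‖₊ : ℝ≥0∞) ^ p)
      ≤ ∫⁻ t in S, J ^ (p - 1) *
          ∫⁻ s, (‖gker ω t s‖₊ : ℝ≥0∞) * (‖g s‖₊ : ℝ≥0∞) ^ p :=
        lintegral_mono fun t => hpt t
    _ = J ^ (p - 1) * ∫⁻ t in S,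
          ∫⁻ s, (‖gker ω t s‖₊ : ℝ≥0∞) * (‖g s‖₊ : ℝ≥0∞) ^ p :=
        lintegral_const_mul' _ _ hJtop
    _ = J ^ (p - 1) * ∫⁻ s,
          ∫⁻ t in S, (‖gker ω t s‖₊ : ℝ≥0∞) * (‖g s‖₊ : ℝ≥0∞) ^ p := by
        rw [lintegral_lintegral_swap (hKmeas.aemeasurable)]
    _ = J ^ (p - 1) * ∫⁻ s, (‖g s‖₊ : ℝ≥0∞) ^ p *
          (∫⁻ t in S, (‖gker ω t s‖₊ : ℝ≥0∞)) := by
        congr 1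
        refine lintegral_congr fun s => ?_
        rw [lintegral_mul_const' _ _ (by
          exact (ENNReal.rpow_lt_top_of_nonneg (by linarith)
            (by simp [ENNReal.coe_ne_top])).ne), mul_comm]

lemma Gop_LpIoi {ω : ℂ} (hω : ω.re ≠ 0) {p : ℝ} (hp : 1 ≤ p) {g : ℝ → ℂ}
    (hgc : Continuous g) {C : ℝ} (hC : ∀ s, ‖g s‖ ≤ C)
    (hfin : (∫⁻ t in Set.Ioi (0:ℝ), (‖g t‖₊ : ℝ≥0∞) ^ p) < ⊤) :
    (∫⁻ t in Set.Ioi (0:ℝ), (‖Gop ω g t‖₊ : ℝ≥0∞) ^ p) < ⊤ := by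
  have ha : 0 < |ω.re| := abs_pos.2 hω
  set J := ENNReal.ofReal (M0 |ω.re|) with hJ
  have hJtop : J ≠ ⊤ := ENNReal.ofReal_ne_top
  have hCtop : (ENNReal.ofReal C) ^ p ≠ ⊤ :=
    (ENNReal.rpow_lt_top_of_nonneg (by linarith) ENNReal.ofReal_ne_top).ne
  refine lt_of_le_of_lt (Gop_lint_pow_le hω hp hgc _) ?_
  have hImeas : Measurable (fun s : ℝ => ∫⁻ t in Set.Ioi (0:ℝ), (‖gker ω t s‖₊ : ℝ≥0∞)) := by
    apply Measurable.lintegral_prod_right'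
      (f := fun q : ℝ × ℝ => (‖gker ω q.2 q.1‖₊ : ℝ≥0∞))
    exact ((gker_meas ω).comp measurable_swap).enorm
  have hsplit : (∫⁻ s, (‖g s‖₊ : ℝ≥0∞) ^ p * ∫⁻ t in Set.Ioi (0:ℝ), (‖gker ω t s‖₊ : ℝ≥0∞))
      = (∫⁻ s in Set.Iic 0, (‖g s‖₊ : ℝ≥0∞) ^ p * ∫⁻ t in Set.Ioi (0:ℝ), (‖gker ω t s‖₊ : ℝ≥0∞))
      + ∫⁻ s in (Set.Iic (0:ℝ))ᶜ, (‖g s‖₊ : ℝ≥0∞) ^ p * ∫⁻ t in Set.Ioi (0:ℝ), (‖gker ω t s‖₊ : ℝ≥0∞) :=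
    (lintegral_add_compl _ measurableSet_Iic).symm
  rw [hsplit]
  apply ENNReal.mul_lt_top (ENNReal.rpow_lt_top_of_nonneg (by linarith) hJtop)
  apply ENNReal.add_lt_top.2
  constructor
  · -- s ≤ 0 part
    have hbd : ∀ s ∈ Set.Iic (0:ℝ),
        (‖g s‖₊ : ℝ≥0∞) ^ p * (∫⁻ t in Set.Ioi (0:ℝ), (‖gker ω t s‖₊ : ℝ≥0∞))
          ≤ ((ENNReal.ofReal C) ^ p * J) * ENNReal.ofReal (Real.exp (-|ω.re| * (-s))) := by
      intro s hs
      rw [Set.mem_Iic] at hs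
      have h1 : (‖g s‖₊ : ℝ≥0∞) ^ p ≤ (ENNReal.ofReal C) ^ p := by
        apply ENNReal.rpow_le_rpow _ (by linarith)
        rw [← enorm_eq_nnnorm, ← ofReal_norm]
        exact ENNReal.ofReal_le_ofReal (hC s)
      have h2 := lint_ker_t_Ioi hω hs
      calc (‖g s‖₊ : ℝ≥0∞) ^ p * (∫⁻ t in Set.Ioi (0:ℝ), (‖gker ω t s‖₊ : ℝ≥0∞))
          ≤ (ENNReal.ofReal C) ^ p * (ENNReal.ofReal (Real.exp (-|ω.re| * (-s))) * J) :=
            mul_le_mul' h1 h2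
        _ = ((ENNReal.ofReal C) ^ p * J) * ENNReal.ofReal (Real.exp (-|ω.re| * (-s))) := by
            ring
    refine lt_of_le_of_lt (setLIntegral_mono' measurableSet_Iic hbd) ?_
    rw [lintegral_const_mul' _ _ (ENNReal.mul_ne_top hCtop hJtop)]
    apply ENNReal.mul_lt_top (ENNReal.mul_lt_top hCtop.lt_top hJtop.lt_top)
    refine lt_of_le_of_lt ?_ (ENNReal.ofReal_lt_top (r := M0 |ω.re|))
    refine le_trans (le_of_eq ?_) (lint_expabs_set ha 0 (Set.Iic 0))
    apply setLIntegral_congr_fun_ae measurableSet_Iic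
    apply Filter.Eventually.of_forall
    intro s hs
    rw [Set.mem_Iic] at hs
    rw [show |(0:ℝ) - s| = -s by
      rw [abs_of_nonneg (by linarith : (0:ℝ) ≤ 0 - s)]; ring]
  · -- s > 0 part
    rw [Set.compl_Iic]
    have hbd : ∀ s ∈ Set.Ioi (0:ℝ),
        (‖g s‖₊ : ℝ≥0∞) ^ p * (∫⁻ t in Set.Ioi (0:ℝ), (‖gker ω t s‖₊ : ℝ≥0∞))
          ≤ J * (‖g s‖₊ : ℝ≥0∞) ^ p := by
      intro s _
      rw [mul_comm]
      refine mul_le_mul_left ?_ _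
      exact le_trans (setLIntegral_le_lintegral _ _) (lint_ker_t_le hω s)
    refine lt_of_le_of_lt (setLIntegral_mono' measurableSet_Ioi hbd) ?_
    rw [lintegral_const_mul' _ _ hJtop]
    exact ENNReal.mul_lt_top hJtop.lt_top hfin

lemma Gop_LpR {ω : ℂ} (hω : ω.re ≠ 0) {p : ℝ} (hp : 1 ≤ p) {g : ℝ → ℂ}
    (hgc : Continuous g)
    (hfin : (∫⁻ t : ℝ, (‖g t‖₊ : ℝ≥0∞) ^ p) < ⊤) :
    (∫⁻ t : ℝ, (‖Gop ω g t‖₊ : ℝ≥0∞) ^ p) < ⊤ := by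
  set J := ENNReal.ofReal (M0 |ω.re|) with hJ
  have hJtop : J ≠ ⊤ := ENNReal.ofReal_ne_top
  have h := Gop_lint_pow_le hω hp hgc Set.univ
  simp only [Measure.restrict_univ] at h
  refine lt_of_le_of_lt h ?_
  apply ENNReal.mul_lt_top (ENNReal.rpow_lt_top_of_nonneg (by linarith) hJtop)
  have hbd : ∀ s : ℝ, (‖g s‖₊ : ℝ≥0∞) ^ p * (∫⁻ t : ℝ, (‖gker ω t s‖₊ : ℝ≥0∞))
      ≤ J * (‖g s‖₊ : ℝ≥0∞) ^ p := by
    intro s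
    rw [mul_comm]
    exact mul_le_mul_left (lint_ker_t_le hω s) _
  refine lt_of_le_of_lt (lintegral_mono hbd) ?_
  rw [lintegral_const_mul' _ _ hJtop]
  exact ENNReal.mul_lt_top hJtop.lt_top hfin

lemma nnorm_le_ofReal {x : ℂ} {C : ℝ} (h : ‖x‖ ≤ C) :
    (‖x‖₊ : ℝ≥0∞) ≤ ENNReal.ofReal C := by
  rw [← enorm_eq_nnnorm, ← ofReal_norm]
  exact ENNReal.ofReal_le_ofReal h

lemma rpow_tail_le {p : ℝ} (hp : 1 ≤ p) {K η : ℝ≥0∞} :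
    K * ((η / (K + 1)) ^ p) ^ (1/p) ≤ η := by
  have hp0 : (0:ℝ) < p := by linarith
  rw [← ENNReal.rpow_mul, mul_one_div_cancel hp0.ne', ENNReal.rpow_one]
  calc K * (η / (K + 1)) ≤ (K + 1) * (η / (K + 1)) :=
        mul_le_mul_left (le_add_right le_rfl) _
    _ ≤ η := ENNReal.mul_div_le

lemma Gop_tendsto_of_Phi {ω : ℂ} {g : ℝ → ℂ} {l : Filter ℝ}
    (hΦ : Tendsto (fun t => ∫⁻ s, (‖gker ω t s‖₊ : ℝ≥0∞) * (‖g s‖₊ : ℝ≥0∞)) l (𝓝 0)) :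
    Tendsto (Gop ω g) l (𝓝 0) := by
  have h1 : Tendsto (fun t => (‖Gop ω g t‖₊ : ℝ≥0∞)) l (𝓝 0) := by
    rw [ENNReal.tendsto_nhds_zero] at hΦ ⊢
    intro ε hε
    filter_upwards [hΦ ε hε] with t ht
    exact le_trans (nnorm_Gop_le ω g t) ht
  rw [tendsto_zero_iff_norm_tendsto_zero]
  have h2 := (ENNReal.tendsto_toReal (by simp : (0:ℝ≥0∞) ≠ ⊤)).comp h1
  simpa [Function.comp_def] using h2

lemma one_sub_inv_nonneg {p : ℝ} (hp : 1 ≤ p) : 0 ≤ 1 - 1/p := by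
  have h1 : 1/p ≤ 1 := by
    rw [div_le_one (by linarith)]; linarith
  linarith

lemma Gop_tendsto_top {ω : ℂ} (hω : ω.re ≠ 0) {p : ℝ} (hp : 1 ≤ p) {g : ℝ → ℂ}
    (hgc : Continuous g) {C : ℝ} (hC : ∀ s, ‖g s‖ ≤ C)
    (hfin : (∫⁻ t in Set.Ioi (0:ℝ), (‖g t‖₊ : ℝ≥0∞) ^ p) < ⊤) :
    Tendsto (Gop ω g) atTop (𝓝 0) := by
  have ha : 0 < |ω.re| := abs_pos.2 hω
  set J := ENNReal.ofReal (M0 |ω.re|) with hJ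
  have hJtop : J ≠ ⊤ := ENNReal.ofReal_ne_top
  set K : ℝ≥0∞ := J ^ (1 - 1/p) with hKdef
  have hKtop : K ≠ ⊤ :=
    (ENNReal.rpow_lt_top_of_nonneg (one_sub_inv_nonneg hp) hJtop).ne
  set D : ℝ≥0∞ := ENNReal.ofReal C * J with hDdef
  have hDtop : D ≠ ⊤ := ENNReal.mul_ne_top ENNReal.ofReal_ne_top hJtop
  apply Gop_tendsto_of_Phi
  rw [ENNReal.tendsto_nhds_zero]
  intro ε hε
  rcases eq_or_ne ε ⊤ with rfl | hεtop
  · exact Filter.Eventually.of_forall fun t => le_top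
  set η := ε / 2 with hηdef
  have hηtop : η ≠ ⊤ := (ENNReal.div_lt_top hεtop (by norm_num)).ne
  have hη : 0 < η := ENNReal.div_pos hε.ne' (by norm_num)
  set δ := (η / (K + 1)) ^ p with hδdef
  have hδpos : 0 < δ := by
    apply ENNReal.rpow_pos
    · exact ENNReal.div_pos hη.ne' (ENNReal.add_ne_top.2 ⟨hKtop, by norm_num⟩)
    · exact (ENNReal.div_lt_top hηtop (by norm_num)).ne
  obtain ⟨B, hB0, hBtail⟩ := tail_top (hgc.measurable.enorm.pow_const p) hfin hδpos
  have htend0 : Tendsto (fun t : ℝ => D * ENNReal.ofReal (Real.exp (-|ω.re| * (t - B))))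
      atTop (𝓝 0) := by
    have hlin : Tendsto (fun t : ℝ => -|ω.re| * (t - B)) atTop atBot := by
      apply Tendsto.const_mul_atTop_of_neg (by linarith : -|ω.re| < 0)
      exact tendsto_atTop_add_const_right atTop (-B) tendsto_id
    have h1 : Tendsto (fun t : ℝ => Real.exp (-|ω.re| * (t - B))) atTop (𝓝 0) :=
      Real.tendsto_exp_atBot.comp hlin
    have h2 : Tendsto (fun t : ℝ => ENNReal.ofReal (Real.exp (-|ω.re| * (t - B))))
        atTop (𝓝 0) := by
      have := (ENNReal.continuous_ofReal.tendsto 0).comp h1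
      simpa [Function.comp_def] using this
    have h3 := ENNReal.Tendsto.const_mul h2 (Or.inr hDtop)
    simpa using h3
  rw [ENNReal.tendsto_nhds_zero] at htend0
  filter_upwards [htend0 η hη, eventually_ge_atTop B] with t h1 h2
  have hsplit : (∫⁻ s, (‖gker ω t s‖₊ : ℝ≥0∞) * (‖g s‖₊ : ℝ≥0∞))
      = (∫⁻ s in Set.Iic B, (‖gker ω t s‖₊ : ℝ≥0∞) * (‖g s‖₊ : ℝ≥0∞))
        + ∫⁻ s in (Set.Iic B)ᶜ, (‖gker ω t s‖₊ : ℝ≥0∞) * (‖g s‖₊ : ℝ≥0∞) :=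
    (lintegral_add_compl _ measurableSet_Iic).symm
  rw [hsplit, Set.compl_Iic]
  have hpart1 : (∫⁻ s in Set.Iic B, (‖gker ω t s‖₊ : ℝ≥0∞) * (‖g s‖₊ : ℝ≥0∞)) ≤ η := by
    calc (∫⁻ s in Set.Iic B, (‖gker ω t s‖₊ : ℝ≥0∞) * (‖g s‖₊ : ℝ≥0∞))
        ≤ ∫⁻ s in Set.Iic B, (‖gker ω t s‖₊ : ℝ≥0∞) * ENNReal.ofReal C :=
          setLIntegral_mono' measurableSet_Iic fun s _ =>
            mul_le_mul_right (nnorm_le_ofReal (hC s)) _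
      _ = (∫⁻ s in Set.Iic B, (‖gker ω t s‖₊ : ℝ≥0∞)) * ENNReal.ofReal C :=
          lintegral_mul_const' _ _ ENNReal.ofReal_ne_top
      _ ≤ (ENNReal.ofReal (Real.exp (-|ω.re| * (t - B))) * J) * ENNReal.ofReal C :=
          mul_le_mul_left (lint_ker_Iic hω h2) _
      _ = D * ENNReal.ofReal (Real.exp (-|ω.re| * (t - B))) := by ring
      _ ≤ η := h1
  have hpart2 : (∫⁻ s in Set.Ioi B, (‖gker ω t s‖₊ : ℝ≥0∞) * (‖g s‖₊ : ℝ≥0∞)) ≤ η := by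
    have hh := hold hp ((volume : Measure ℝ).restrict (Set.Ioi B))
      (gker_meas1 ω t).enorm.aemeasurable hgc.measurable.enorm.aemeasurable
    refine le_trans hh ?_
    have hf1 : (∫⁻ s in Set.Ioi B, (‖gker ω t s‖₊ : ℝ≥0∞)) ^ (1 - 1/p) ≤ K :=
      ENNReal.rpow_le_rpow (le_trans (setLIntegral_le_lintegral _ _) (lint_ker_le hω t))
        (one_sub_inv_nonneg hp)
    have hf2 : (∫⁻ s in Set.Ioi B, (‖gker ω t s‖₊ : ℝ≥0∞) * (‖g s‖₊ : ℝ≥0∞) ^ p) ^ (1/p)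
        ≤ (δ : ℝ≥0∞) ^ (1/p) := by
      apply ENNReal.rpow_le_rpow _ (by positivity)
      refine le_trans ?_ hBtail
      refine setLIntegral_mono' measurableSet_Ioi fun s _ => ?_
      calc (‖gker ω t s‖₊ : ℝ≥0∞) * (‖g s‖₊ : ℝ≥0∞) ^ p
          ≤ 1 * (‖g s‖₊ : ℝ≥0∞) ^ p := mul_le_mul_left (nnorm_gker_le_one hω t s) _
        _ = (‖g s‖₊ : ℝ≥0∞) ^ p := one_mul _
    refine le_trans (mul_le_mul' hf1 hf2) ?_
    exact rpow_tail_le hp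
  calc (∫⁻ s in Set.Iic B, (‖gker ω t s‖₊ : ℝ≥0∞) * (‖g s‖₊ : ℝ≥0∞))
        + ∫⁻ s in Set.Ioi B, (‖gker ω t s‖₊ : ℝ≥0∞) * (‖g s‖₊ : ℝ≥0∞)
      ≤ η + η := add_le_add hpart1 hpart2
    _ = ε := by rw [hηdef, ENNReal.add_halves]

lemma Gop_tendsto_bot {ω : ℂ} (hω : ω.re ≠ 0) {p : ℝ} (hp : 1 ≤ p) {g : ℝ → ℂ}
    (hgc : Continuous g) {C : ℝ} (hC : ∀ s, ‖g s‖ ≤ C)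
    (hfin : (∫⁻ t : ℝ, (‖g t‖₊ : ℝ≥0∞) ^ p) < ⊤) :
    Tendsto (Gop ω g) atBot (𝓝 0) := by
  have ha : 0 < |ω.re| := abs_pos.2 hω
  set J := ENNReal.ofReal (M0 |ω.re|) with hJ
  have hJtop : J ≠ ⊤ := ENNReal.ofReal_ne_top
  set K : ℝ≥0∞ := J ^ (1 - 1/p) with hKdef
  have hKtop : K ≠ ⊤ :=
    (ENNReal.rpow_lt_top_of_nonneg (one_sub_inv_nonneg hp) hJtop).ne
  set D : ℝ≥0∞ := ENNReal.ofReal C * J with hDdef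
  have hDtop : D ≠ ⊤ := ENNReal.mul_ne_top ENNReal.ofReal_ne_top hJtop
  apply Gop_tendsto_of_Phi
  rw [ENNReal.tendsto_nhds_zero]
  intro ε hε
  rcases eq_or_ne ε ⊤ with rfl | hεtop
  · exact Filter.Eventually.of_forall fun t => le_top
  set η := ε / 2 with hηdef
  have hηtop : η ≠ ⊤ := (ENNReal.div_lt_top hεtop (by norm_num)).ne
  have hη : 0 < η := ENNReal.div_pos hε.ne' (by norm_num)
  set δ := (η / (K + 1)) ^ p with hδdef
  have hδpos : 0 < δ := by
    apply ENNReal.rpow_pos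
    · exact ENNReal.div_pos hη.ne' (ENNReal.add_ne_top.2 ⟨hKtop, by norm_num⟩)
    · exact (ENNReal.div_lt_top hηtop (by norm_num)).ne
  obtain ⟨B, hB0, hBtail⟩ := tail_bot (hgc.measurable.enorm.pow_const p) hfin hδpos
  have htend0 : Tendsto (fun t : ℝ => D * ENNReal.ofReal (Real.exp (-|ω.re| * (B - t))))
      atBot (𝓝 0) := by
    have hlin : Tendsto (fun t : ℝ => -|ω.re| * (B - t)) atBot atBot := by
      apply Tendsto.const_mul_atTop_of_neg (by linarith : -|ω.re| < 0)
      have h0 : Tendsto (fun t : ℝ => -t) atBot atTop := tendsto_neg_atBot_atTop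
      have := tendsto_atTop_add_const_left atBot B h0
      exact this.congr fun t => by ring
    have h1 : Tendsto (fun t : ℝ => Real.exp (-|ω.re| * (B - t))) atBot (𝓝 0) :=
      Real.tendsto_exp_atBot.comp hlin
    have h2 : Tendsto (fun t : ℝ => ENNReal.ofReal (Real.exp (-|ω.re| * (B - t))))
        atBot (𝓝 0) := by
      have := (ENNReal.continuous_ofReal.tendsto 0).comp h1
      simpa [Function.comp_def] using this
    have h3 := ENNReal.Tendsto.const_mul h2 (Or.inr hDtop)
    simpa using h3
  rw [ENNReal.tendsto_nhds_zero] at htend0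
  filter_upwards [htend0 η hη, eventually_le_atBot B] with t h1 h2
  have hsplit : (∫⁻ s, (‖gker ω t s‖₊ : ℝ≥0∞) * (‖g s‖₊ : ℝ≥0∞))
      = (∫⁻ s in Set.Ici B, (‖gker ω t s‖₊ : ℝ≥0∞) * (‖g s‖₊ : ℝ≥0∞))
        + ∫⁻ s in (Set.Ici B)ᶜ, (‖gker ω t s‖₊ : ℝ≥0∞) * (‖g s‖₊ : ℝ≥0∞) :=
    (lintegral_add_compl _ measurableSet_Ici).symm
  rw [hsplit, Set.compl_Ici]
  have hpart1 : (∫⁻ s in Set.Ici B, (‖gker ω t s‖₊ : ℝ≥0∞) * (‖g s‖₊ : ℝ≥0∞)) ≤ η := by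
    calc (∫⁻ s in Set.Ici B, (‖gker ω t s‖₊ : ℝ≥0∞) * (‖g s‖₊ : ℝ≥0∞))
        ≤ ∫⁻ s in Set.Ici B, (‖gker ω t s‖₊ : ℝ≥0∞) * ENNReal.ofReal C :=
          setLIntegral_mono' measurableSet_Ici fun s _ =>
            mul_le_mul_right (nnorm_le_ofReal (hC s)) _
      _ = (∫⁻ s in Set.Ici B, (‖gker ω t s‖₊ : ℝ≥0∞)) * ENNReal.ofReal C :=
          lintegral_mul_const' _ _ ENNReal.ofReal_ne_top
      _ ≤ (ENNReal.ofReal (Real.exp (-|ω.re| * (B - t))) * J) * ENNReal.ofReal C :=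
          mul_le_mul_left (lint_ker_Ici hω h2) _
      _ = D * ENNReal.ofReal (Real.exp (-|ω.re| * (B - t))) := by ring
      _ ≤ η := h1
  have hpart2 : (∫⁻ s in Set.Iio B, (‖gker ω t s‖₊ : ℝ≥0∞) * (‖g s‖₊ : ℝ≥0∞)) ≤ η := by
    have hh := hold hp ((volume : Measure ℝ).restrict (Set.Iio B))
      (gker_meas1 ω t).enorm.aemeasurable hgc.measurable.enorm.aemeasurable
    refine le_trans hh ?_
    have hf1 : (∫⁻ s in Set.Iio B, (‖gker ω t s‖₊ : ℝ≥0∞)) ^ (1 - 1/p) ≤ K :=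
      ENNReal.rpow_le_rpow (le_trans (setLIntegral_le_lintegral _ _) (lint_ker_le hω t))
        (one_sub_inv_nonneg hp)
    have hf2 : (∫⁻ s in Set.Iio B, (‖gker ω t s‖₊ : ℝ≥0∞) * (‖g s‖₊ : ℝ≥0∞) ^ p) ^ (1/p)
        ≤ (δ : ℝ≥0∞) ^ (1/p) := by
      apply ENNReal.rpow_le_rpow _ (by positivity)
      refine le_trans ?_ hBtail
      refine setLIntegral_mono' measurableSet_Iio fun s _ => ?_
      calc (‖gker ω t s‖₊ : ℝ≥0∞) * (‖g s‖₊ : ℝ≥0∞) ^ p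
          ≤ 1 * (‖g s‖₊ : ℝ≥0∞) ^ p := mul_le_mul_left (nnorm_gker_le_one hω t s) _
        _ = (‖g s‖₊ : ℝ≥0∞) ^ p := one_mul _
    refine le_trans (mul_le_mul' hf1 hf2) ?_
    exact rpow_tail_le hp
  calc (∫⁻ s in Set.Ici B, (‖gker ω t s‖₊ : ℝ≥0∞) * (‖g s‖₊ : ℝ≥0∞))
        + ∫⁻ s in Set.Iio B, (‖gker ω t s‖₊ : ℝ≥0∞) * (‖g s‖₊ : ℝ≥0∞)
      ≤ η + η := add_le_add hpart1 hpart2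
    _ = ε := by rw [hηdef, ENNReal.add_halves]

lemma Gop_norm_le {ω : ℂ} (hω : ω.re ≠ 0) {f : ℝ → ℂ}
    (hm : AEStronglyMeasurable f volume) {C : ℝ} (hC : ∀ s, ‖f s‖ ≤ C) (t : ℝ) :
    ‖Gop ω f t‖ ≤ M0 |ω.re| * C :=
  norm_integral_ker_le hω hm hC t

/-- `G_ω` maps `AP(p)` into `AP(p) ∩ AAP` and `AP₀(p)` into `AP₀(p) ∩ AAP₀`. -/
theorem stmt5 (ω : ℂ) (hω : ω.re ≠ 0) (p : ℝ) (hp : 1 ≤ p) (r : ℝ → ℂ) :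
    (APp p r → APp p (Gop ω r) ∧ AAP (Gop ω r)) ∧
    (APp0 p r → APp0 p (Gop ω r) ∧ AAP0 (Gop ω r)) := by
  constructor
  · rintro ⟨⟨hrc, Cr, hCr⟩, φ, g, hsum, hφAP, hg0⟩
    obtain ⟨Cφ, hCφ⟩ := AP_bounded hφAP
    have hφc : Continuous φ := hφAP.1
    have hgeq : g = fun t => r t - φ t := funext fun t => by rw [hsum t]; ring
    have hgc : Continuous g := by rw [hgeq]; exact hrc.sub hφc
    have hgC : ∀ s, ‖g s‖ ≤ Cr + Cφ := fun s => by
      rw [hgeq]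
      exact (norm_sub_le _ _).trans (add_le_add (hCr s) (hCφ s))
    have hgfin := hg0.2
    have hrBC : BCb (Gop ω r) :=
      ⟨Gop_continuous hω hrc hCr,
        M0 |ω.re| * Cr, fun t => Gop_norm_le hω hrc.aestronglyMeasurable hCr t⟩
    have hGsum : ∀ t, Gop ω r t = Gop ω φ t + Gop ω g t :=
      Gop_add hω hsum hφc.aestronglyMeasurable hCφ hgc.aestronglyMeasurable hgC
    have hGφ : AP (Gop ω φ) := Gop_AP hω hφAP
    constructor
    · refine ⟨hrBC, Gop ω φ, Gop ω g, hGsum, hGφ, ?_, ?_⟩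
      · exact ⟨M0 |ω.re| * (Cr + Cφ), fun t _ =>
          Gop_norm_le hω hgc.aestronglyMeasurable hgC t⟩
      · exact Gop_LpIoi hω hp hgc hgC hgfin
    · exact ⟨hrBC, Gop ω φ, Gop ω g, hGsum, hGφ,
        Gop_tendsto_top hω hp hgc hgC hgfin⟩
  · rintro ⟨⟨hrc, Cr, hCr⟩, φ, g, hsum, hφAP, hg0⟩
    obtain ⟨Cφ, hCφ⟩ := AP_bounded hφAP
    have hφc : Continuous φ := hφAP.1
    have hgeq : g = fun t => r t - φ t := funext fun t => by rw [hsum t]; ring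
    have hgc : Continuous g := by rw [hgeq]; exact hrc.sub hφc
    have hgC : ∀ s, ‖g s‖ ≤ Cr + Cφ := fun s => by
      rw [hgeq]
      exact (norm_sub_le _ _).trans (add_le_add (hCr s) (hCφ s))
    have hgfin : (∫⁻ t : ℝ, (‖g t‖₊ : ℝ≥0∞) ^ p) < ⊤ := hg0
    have hgfin' : (∫⁻ t in Set.Ioi (0:ℝ), (‖g t‖₊ : ℝ≥0∞) ^ p) < ⊤ :=
      (setLIntegral_le_lintegral _ _).trans_lt hgfin
    have hrBC : BCb (Gop ω r) :=
      ⟨Gop_continuous hω hrc hCr,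
        M0 |ω.re| * Cr, fun t => Gop_norm_le hω hrc.aestronglyMeasurable hCr t⟩
    have hGsum : ∀ t, Gop ω r t = Gop ω φ t + Gop ω g t :=
      Gop_add hω hsum hφc.aestronglyMeasurable hCφ hgc.aestronglyMeasurable hgC
    have hGφ : AP (Gop ω φ) := Gop_AP hω hφAP
    constructor
    · exact ⟨hrBC, Gop ω φ, Gop ω g, hGsum, hGφ, Gop_LpR hω hp hgc hgfin⟩
    · exact ⟨hrBC, Gop ω φ, Gop ω g, hGsum, hGφ,
        Gop_tendsto_top hω hp hgc hgC hgfin',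
        Gop_tendsto_bot hω hp hgc hgC hgfin⟩

end
end

section
/- Let n ≥ 2. If R ∈ AP(ℝ×ℂ^{n−1}) and z_0, …, z_{n−2} : ℝ → ℂ are almost periodic, then the map t ↦ R(t, z_0(t), …, z_{n−2}(t)) is almost periodic. The same conclusion holds with AP replaced throughout by AAP, and with AP replaced throughout by AAP_0. -/
open MeasureTheory Filter Topology
open scoped ENNReal NNReal

noncomputable section

-- aux lemmas
lemma tu_comp_subseq {α β : Type*} [UniformSpace β] {F : ℕ → α → β} {g : α → β}
    (h : TendstoUniformly F g atTop) {ψ : ℕ → ℕ} (hψ : StrictMono ψ) :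
    TendstoUniformly (fun k => F (ψ k)) g atTop :=
  fun u hu => hψ.tendsto_atTop.eventually (h u hu)

lemma tuo_comp_subseq {α β : Type*} [UniformSpace β] {F : ℕ → α → β} {g : α → β} {s : Set α}
    (h : TendstoUniformlyOn F g atTop s) {ψ : ℕ → ℕ} (hψ : StrictMono ψ) :
    TendstoUniformlyOn (fun k => F (ψ k)) g atTop s :=
  fun u hu => hψ.tendsto_atTop.eventually (h u hu)

lemma AP.bounded {f : ℝ → ℂ} (hf : AP f) : ∃ C : ℝ, ∀ t, ‖f t‖ ≤ C := by
  by_contra h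
  push_neg at h
  choose b hb using fun k : ℕ => h k
  obtain ⟨φ, hφ, g, hg⟩ := hf.2 b
  have h0 : Tendsto (fun k => f (0 + b (φ k))) atTop (𝓝 (g 0)) := hg.tendsto_at 0
  have h1 : Tendsto (fun k => ‖f (0 + b (φ k))‖) atTop atTop := by
    apply tendsto_atTop_mono (fun k => ?_) tendsto_natCast_atTop_atTop
    calc ((k : ℕ) : ℝ) ≤ (φ k : ℝ) := by exact_mod_cast hφ.id_le k
      _ ≤ ‖f (b (φ k))‖ := (hb (φ k)).le
      _ = ‖f (0 + b (φ k))‖ := by rw [zero_add]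
  exact not_tendsto_atTop_of_tendsto_nhds h0.norm h1

lemma extract_AP : ∀ (m : ℕ) (z : Fin m → ℝ → ℂ), (∀ i, AP (z i)) → ∀ b : ℕ → ℝ,
    ∃ φ : ℕ → ℕ, StrictMono φ ∧ ∀ i, ∃ g : ℝ → ℂ,
      TendstoUniformly (fun k t => z i (t + b (φ k))) g atTop := by
  intro m
  induction m with
  | zero => exact fun z hz b => ⟨id, strictMono_id, fun i => i.elim0⟩
  | succ m ih =>
    intro z hz b
    obtain ⟨φ₁, hφ₁, h1⟩ := ih (fun i => z i.castSucc) (fun i => hz _) b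
    obtain ⟨φ₂, hφ₂, g, hg⟩ := (hz (Fin.last m)).2 (b ∘ φ₁)
    refine ⟨φ₁ ∘ φ₂, hφ₁.comp hφ₂, fun i => ?_⟩
    induction i using Fin.lastCases with
    | last => exact ⟨g, hg⟩
    | cast j =>
      obtain ⟨gj, hgj⟩ := h1 j
      exact ⟨gj, tu_comp_subseq hgj hφ₂⟩


lemma APm.unif_cont {m : ℕ} {F : ℝ → (Fin m → ℂ) → ℂ} (hF : APm m F)
    {K : Set (Fin m → ℂ)} (hK : IsCompact K) {ε : ℝ} (hε : 0 < ε) :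
    ∃ δ > 0, ∀ t x y, x ∈ K → y ∈ K → dist x y < δ → dist (F t x) (F t y) ≤ ε := by
  by_contra hcon
  push_neg at hcon
  have hcon' : ∀ k : ℕ, ∃ t x y, x ∈ K ∧ y ∈ K ∧ dist x y < 1/(k+1) ∧
      ε < dist (F t x) (F t y) := by
    intro k
    obtain ⟨t, x, y, hx, hy, hxy, hd⟩ := hcon (1/(k+1)) (by positivity)
    exact ⟨t, x, y, hx, hy, hxy, hd⟩
  choose t x y hxK hyK hxy hd using hcon'
  obtain ⟨φ, hφ, G, hG⟩ := hF.2 t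
  have hGK := hG K hK
  obtain ⟨x₀, hx₀K, ψ, hψ, hxlim⟩ := hK.tendsto_subseq (fun k => hxK (φ k))
  -- y also converges to x₀
  have hdist0 : Tendsto (fun k => dist (x (φ (ψ k))) (y (φ (ψ k)))) atTop (𝓝 0) := by
    apply squeeze_zero (fun k => dist_nonneg) (fun k => ?_)
      tendsto_one_div_add_atTop_nhds_zero_nat
    have h1 : dist (x (φ (ψ k))) (y (φ (ψ k))) < 1/(φ (ψ k)+1) := hxy _
    have h2 : (1:ℝ)/(φ (ψ k)+1) ≤ 1/(k+1) := by
      apply one_div_le_one_div_of_le (by positivity)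
      have h3 : (k:ℝ) ≤ ((φ (ψ k) : ℕ) : ℝ) := by exact_mod_cast (hφ.comp hψ).id_le k
      linarith
    linarith
  have hylim : Tendsto (fun k => y (φ (ψ k))) atTop (𝓝 x₀) :=
    hxlim.congr_dist hdist0
  -- continuity of the limit G on univ ×ˢ K
  have hGc : ContinuousOn (fun p : ℝ × (Fin m → ℂ) => G p.1 p.2) (Set.univ ×ˢ K) := by
    apply hGK.continuousOn
    refine Filter.Frequently.of_forall fun n => ?_
    exact (hF.1.comp ((continuous_fst.add continuous_const).prodMk continuous_snd)).continuousOn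
  -- convergence of F (t n) (x n) to G 0 x₀ along the subsequence
  have key : ∀ (w : ℕ → Fin m → ℂ), (∀ k, w k ∈ K) →
      Tendsto (fun k => w (φ (ψ k))) atTop (𝓝 x₀) →
      Tendsto (fun k => F (t (φ (ψ k))) (w (φ (ψ k)))) atTop (𝓝 (G 0 x₀)) := by
    intro w hwK hwlim
    have hA : Tendsto (fun k => G 0 (w (φ (ψ k)))) atTop (𝓝 (G 0 x₀)) := by
      have hc : ContinuousWithinAt (fun p : ℝ × (Fin m → ℂ) => G p.1 p.2)
          (Set.univ ×ˢ K) (0, x₀) := hGc (0, x₀) ⟨Set.mem_univ _, hx₀K⟩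
      have hseq : Tendsto (fun k => (((0:ℝ), w (φ (ψ k))) : ℝ × (Fin m → ℂ))) atTop
          (𝓝[Set.univ ×ˢ K] ((0:ℝ), x₀)) := by
        apply tendsto_nhdsWithin_of_tendsto_nhds_of_eventually_within
        · exact tendsto_const_nhds.prodMk_nhds hwlim
        · filter_upwards with k using ⟨Set.mem_univ _, hwK _⟩
      exact hc.tendsto.comp hseq
    have hB : Tendsto (fun k => dist (G 0 (w (φ (ψ k))))
        (F (t (φ (ψ k))) (w (φ (ψ k))))) atTop (𝓝 0) := by
      rw [Metric.tendsto_nhds]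
      intro ε' hε'
      have := Metric.tendstoUniformlyOn_iff.1 hGK ε' hε'
      have h2 := hψ.tendsto_atTop.eventually this
      filter_upwards [h2] with k hk
      have := hk ((0:ℝ), w (φ (ψ k))) ⟨Set.mem_univ _, hwK _⟩
      simp only [zero_add] at this
      simpa [Real.dist_eq, abs_of_nonneg dist_nonneg] using this
    exact hA.congr_dist hB
  have hxF := key x hxK hxlim
  have hyF := key y hyK hylim
  have hdd : Tendsto (fun k => dist (F (t (φ (ψ k))) (x (φ (ψ k))))
      (F (t (φ (ψ k))) (y (φ (ψ k))))) atTop (𝓝 0) := by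
    simpa using hxF.dist hyF
  have : ∀ᶠ k in atTop, dist (F (t (φ (ψ k))) (x (φ (ψ k))))
      (F (t (φ (ψ k))) (y (φ (ψ k)))) < ε := by
    have := Metric.tendsto_nhds.1 hdd ε hε
    filter_upwards [this] with k hk
    simpa [Real.dist_eq, abs_of_nonneg dist_nonneg] using hk
  obtain ⟨k, hk⟩ := this.exists
  exact absurd (hd (φ (ψ k))) (not_lt.2 hk.le)


def Kball (m : ℕ) (C : ℝ) : Set (Fin m → ℂ) := Set.univ.pi fun _ => Metric.closedBall 0 C

lemma Kball_compact (m : ℕ) (C : ℝ) : IsCompact (Kball m C) :=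
  isCompact_univ_pi fun _ => isCompact_closedBall _ _

lemma mem_Kball {m : ℕ} {C : ℝ} {x : Fin m → ℂ} (h : ∀ i, ‖x i‖ ≤ C) : x ∈ Kball m C :=
  Set.mem_univ_pi.2 fun i => by simpa [Metric.mem_closedBall, dist_zero_right] using h i

lemma bound_combine {m : ℕ} (C : Fin m → ℝ) (i : Fin m) : C i ≤ ∑ j, max (C j) 0 :=
  le_trans (le_max_left _ _) (Finset.single_le_sum (f := fun j => max (C j) 0)
    (fun j _ => le_max_right _ _) (Finset.mem_univ i))

lemma APm.comp {m : ℕ} {R : ℝ → (Fin m → ℂ) → ℂ} (hR : APm m R)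
    {z : Fin m → ℝ → ℂ} (hz : ∀ i, AP (z i)) : AP (fun t => R t (fun i => z i t)) := by
  constructor
  · exact hR.1.comp (continuous_id.prodMk (continuous_pi fun i => (hz i).1))
  intro b
  choose Cz hCz using fun i => (hz i).bounded
  set C₀ : ℝ := ∑ j, max (Cz j) 0 with hC₀def
  have hC₀ : ∀ i t, ‖z i t‖ ≤ C₀ := fun i t => (hCz i t).trans (bound_combine Cz i)
  have hK : IsCompact (Kball m C₀) := Kball_compact m C₀
  have hzK : ∀ t, (fun i => z i t) ∈ Kball m C₀ := fun t => mem_Kball fun i => hC₀ i t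
  obtain ⟨φ₁, hφ₁, G, hG⟩ := hR.2 b
  obtain ⟨φ₂, hφ₂, hzconv⟩ := extract_AP m z hz (b ∘ φ₁)
  choose g hg using hzconv
  set φ : ℕ → ℕ := φ₁ ∘ φ₂ with hφdef
  have hφ : StrictMono φ := hφ₁.comp hφ₂
  have hGK : TendstoUniformlyOn (fun k (p : ℝ × (Fin m → ℂ)) => R (p.1 + b (φ k)) p.2)
      (fun p => G p.1 p.2) atTop (Set.univ ×ˢ Kball m C₀) :=
    tuo_comp_subseq (hG _ hK) hφ₂
  have hcauchy : UniformCauchySeqOn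
      (fun k t => R (t + b (φ k)) (fun i => z i (t + b (φ k)))) atTop Set.univ := by
    rw [Metric.uniformCauchySeqOn_iff]
    intro ε hε
    obtain ⟨δ, hδ, hδ'⟩ := hR.unif_cont hK (show (0:ℝ) < ε/3 by linarith)
    have hz' : ∀ᶠ k in atTop, ∀ i : Fin m, ∀ s : ℝ,
        dist (g i s) (z i (s + b (φ k))) < δ/2 := by
      rw [eventually_all]
      intro i
      exact Metric.tendstoUniformly_iff.1 (hg i) (δ/2) (by linarith)
    have hR' : ∀ᶠ k in atTop, ∀ p ∈ Set.univ ×ˢ Kball m C₀,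
        dist (G p.1 p.2) (R (p.1 + b (φ k)) p.2) < ε/3 :=
      Metric.tendstoUniformlyOn_iff.1 hGK (ε/3) (by linarith)
    obtain ⟨N, hN⟩ := (hz'.and hR').exists_forall_of_atTop
    refine ⟨N, fun k hk l hl s _ => ?_⟩
    have hZ : dist (fun i => z i (s + b (φ k))) (fun i => z i (s + b (φ l))) < δ := by
      rw [dist_pi_lt_iff hδ]
      intro i
      calc dist (z i (s + b (φ k))) (z i (s + b (φ l)))
          ≤ dist (z i (s + b (φ k))) (g i s) + dist (g i s) (z i (s + b (φ l))) :=
            dist_triangle _ _ _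
        _ < δ/2 + δ/2 := by
            have h1 := (hN k hk).1 i s
            have h2 := (hN l hl).1 i s
            rw [dist_comm] at h1
            exact add_lt_add h1 h2
        _ = δ := by ring
    calc dist (R (s + b (φ k)) (fun i => z i (s + b (φ k))))
          (R (s + b (φ l)) (fun i => z i (s + b (φ l))))
        ≤ dist (R (s + b (φ k)) (fun i => z i (s + b (φ k))))
            (R (s + b (φ k)) (fun i => z i (s + b (φ l)))) +
          dist (R (s + b (φ k)) (fun i => z i (s + b (φ l))))
            (R (s + b (φ l)) (fun i => z i (s + b (φ l)))) := dist_triangle _ _ _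
      _ < ε/3 + (ε/3 + ε/3) := by
          apply add_lt_add_of_le_of_lt
          · exact hδ' _ _ _ (hzK _) (hzK _) hZ
          · calc dist (R (s + b (φ k)) (fun i => z i (s + b (φ l))))
                  (R (s + b (φ l)) (fun i => z i (s + b (φ l))))
                ≤ dist (R (s + b (φ k)) (fun i => z i (s + b (φ l))))
                    (G s (fun i => z i (s + b (φ l)))) +
                  dist (G s (fun i => z i (s + b (φ l))))
                    (R (s + b (φ l)) (fun i => z i (s + b (φ l)))) := dist_triangle _ _ _
              _ < ε/3 + ε/3 := by
                  have h1 := (hN k hk).2 (s, fun i => z i (s + b (φ l)))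
                    ⟨Set.mem_univ _, hzK _⟩
                  have h2 := (hN l hl).2 (s, fun i => z i (s + b (φ l)))
                    ⟨Set.mem_univ _, hzK _⟩
                  rw [dist_comm] at h1
                  exact add_lt_add h1 h2
      _ = ε := by ring
  have hpt : ∀ s : ℝ, ∃ L : ℂ,
      Tendsto (fun k => R (s + b (φ k)) (fun i => z i (s + b (φ k)))) atTop (𝓝 L) := by
    intro s
    apply cauchySeq_tendsto_of_complete
    rw [Metric.cauchySeq_iff]
    intro ε hε
    obtain ⟨N, hN⟩ := Metric.uniformCauchySeqOn_iff.1 hcauchy ε hε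
    exact ⟨N, fun k hk l hl => hN k hk l hl s (Set.mem_univ s)⟩
  choose gl hgl using hpt
  exact ⟨φ, hφ, gl, tendstoUniformlyOn_univ.1
    (hcauchy.tendstoUniformlyOn_of_tendsto fun s _ => hgl s)⟩


/-- The decay part of the composition tends to zero along `l`. -/
lemma decay_comp {m : ℕ} {Φ h : ℝ → (Fin m → ℂ) → ℂ} (hΦ : APm m Φ)
    {z w : Fin m → ℝ → ℂ} {l : Filter ℝ}
    {K : Set (Fin m → ℂ)} (hK : IsCompact K)
    (hzK : ∀ t, (fun i => z i t) ∈ K) (hwK : ∀ t, (fun i => w i t) ∈ K)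
    (hg : ∀ i, Tendsto (fun t => z i t - w i t) l (𝓝 0))
    (hh : TendstoUniformlyOn (fun t x => h t x) 0 l K) :
    Tendsto (fun t => (Φ t (fun i => z i t) - Φ t (fun i => w i t)) + h t (fun i => z i t))
      l (𝓝 0) := by
  have part1 : Tendsto (fun t => Φ t (fun i => z i t) - Φ t (fun i => w i t)) l (𝓝 0) := by
    rw [Metric.tendsto_nhds]
    intro ε hε
    obtain ⟨δ, hδ, hδ'⟩ := hΦ.unif_cont hK (show (0:ℝ) < ε/2 by linarith)
    have hev : ∀ᶠ t in l, ∀ i : Fin m, dist (z i t) (w i t) < δ := by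
      rw [eventually_all]
      intro i
      have := Metric.tendsto_nhds.1 (hg i) δ hδ
      filter_upwards [this] with t ht
      simpa [dist_eq_norm] using ht
    filter_upwards [hev] with t ht
    have hZ : dist (fun i => z i t) (fun i => w i t) < δ := (dist_pi_lt_iff hδ).2 ht
    have := hδ' t _ _ (hzK t) (hwK t) hZ
    rw [dist_zero_right, ← dist_eq_norm]
    linarith
  have part2 : Tendsto (fun t => h t (fun i => z i t)) l (𝓝 0) := by
    rw [Metric.tendsto_nhds]
    intro ε hε
    have := Metric.tendstoUniformlyOn_iff.1 hh ε hε
    filter_upwards [this] with t ht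
    have := ht (fun i => z i t) (hzK t)
    simpa [dist_comm] using this
  simpa using part1.add part2

lemma AAPm.comp {m : ℕ} {R : ℝ → (Fin m → ℂ) → ℂ} (hR : AAPm m R)
    {z : Fin m → ℝ → ℂ} (hz : ∀ i, AAP (z i)) : AAP (fun t => R t (fun i => z i t)) := by
  obtain ⟨hcont, ⟨C, hC⟩, Φ, h, hdecomp, hΦ, hdec⟩ := hR
  choose w g hzd hwAP hgz using fun i => (hz i).2
  have hcts : Continuous (fun t => R t (fun i => z i t)) :=
    hcont.comp (continuous_id.prodMk (continuous_pi fun i => (hz i).1.1))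
  refine ⟨⟨hcts, C, fun t => hC _ _⟩, fun t => Φ t (fun i => w i t),
    fun t => R t (fun i => z i t) - Φ t (fun i => w i t), fun t => by ring,
    hΦ.comp hwAP, ?_⟩
  -- choose compact set
  choose Cz hCz using fun i => (hz i).1.2
  choose Cw hCw using fun i => (hwAP i).bounded
  set C₀ : ℝ := (∑ j, max (Cz j) 0) + (∑ j, max (Cw j) 0) with hC₀
  have hsum_nonneg : ∀ (f : Fin m → ℝ), (0:ℝ) ≤ ∑ j, max (f j) 0 :=
    fun f => Finset.sum_nonneg fun j _ => le_max_right _ _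
  have hzK : ∀ t, (fun i => z i t) ∈ Kball m C₀ := fun t => mem_Kball fun i =>
    ((hCz i t).trans (bound_combine Cz i)).trans (le_add_of_nonneg_right (hsum_nonneg Cw))
  have hwK : ∀ t, (fun i => w i t) ∈ Kball m C₀ := fun t => mem_Kball fun i =>
    ((hCw i t).trans (bound_combine Cw i)).trans (le_add_of_nonneg_left (hsum_nonneg Cz))
  have hg : ∀ i, Tendsto (fun t => z i t - w i t) atTop (𝓝 0) := fun i => by
    have : (fun t => z i t - w i t) = g i := by
      funext t; rw [hzd i t]; ring
    rw [this]; exact hgz i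
  have := decay_comp hΦ (Kball_compact m C₀) hzK hwK hg (hdec _ (Kball_compact m C₀))
  apply this.congr
  intro t
  rw [hdecomp t]
  ring

lemma AAP0m.comp {m : ℕ} {R : ℝ → (Fin m → ℂ) → ℂ} (hR : AAP0m m R)
    {z : Fin m → ℝ → ℂ} (hz : ∀ i, AAP0 (z i)) : AAP0 (fun t => R t (fun i => z i t)) := by
  obtain ⟨hcont, ⟨C, hC⟩, Φ, h, hdecomp, hΦ, hdecT, hdecB⟩ := hR
  choose w g hzd hwAP hgz using fun i => (hz i).2
  have hcts : Continuous (fun t => R t (fun i => z i t)) :=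
    hcont.comp (continuous_id.prodMk (continuous_pi fun i => (hz i).1.1))
  choose Cz hCz using fun i => (hz i).1.2
  choose Cw hCw using fun i => (hwAP i).bounded
  set C₀ : ℝ := (∑ j, max (Cz j) 0) + (∑ j, max (Cw j) 0) with hC₀
  have hsum_nonneg : ∀ (f : Fin m → ℝ), (0:ℝ) ≤ ∑ j, max (f j) 0 :=
    fun f => Finset.sum_nonneg fun j _ => le_max_right _ _
  have hzK : ∀ t, (fun i => z i t) ∈ Kball m C₀ := fun t => mem_Kball fun i =>
    ((hCz i t).trans (bound_combine Cz i)).trans (le_add_of_nonneg_right (hsum_nonneg Cw))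
  have hwK : ∀ t, (fun i => w i t) ∈ Kball m C₀ := fun t => mem_Kball fun i =>
    ((hCw i t).trans (bound_combine Cw i)).trans (le_add_of_nonneg_left (hsum_nonneg Cz))
  have heq : ∀ i, (fun t => z i t - w i t) = g i := fun i => by
    funext t; rw [hzd i t]; ring
  have hgT : ∀ i, Tendsto (fun t => z i t - w i t) atTop (𝓝 0) := fun i => by
    rw [heq i]; exact (hgz i).1
  have hgB : ∀ i, Tendsto (fun t => z i t - w i t) atBot (𝓝 0) := fun i => by
    rw [heq i]; exact (hgz i).2
  have hT := decay_comp hΦ (Kball_compact m C₀) hzK hwK hgT (hdecT _ (Kball_compact m C₀))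
  have hB := decay_comp hΦ (Kball_compact m C₀) hzK hwK hgB (hdecB _ (Kball_compact m C₀))
  refine ⟨⟨hcts, C, fun t => hC _ _⟩, fun t => Φ t (fun i => w i t),
    fun t => R t (fun i => z i t) - Φ t (fun i => w i t), fun t => by ring,
    hΦ.comp hwAP, ?_, ?_⟩
  · apply hT.congr
    intro t
    rw [hdecomp t]
    ring
  · apply hB.congr
    intro t
    rw [hdecomp t]
    ring


/-- Superposition: composing an almost periodic (resp. asymptotically
almost periodic) function of `(t,Z)` with almost periodic (resp. AAP, AAP₀) functions
`z_0,…,z_{n-2}` yields a function of the same class. -/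
theorem stmt6 (n : ℕ) (hn : 2 ≤ n) :
    (∀ R : ℝ → (Fin (n-1) → ℂ) → ℂ, APm (n-1) R →
      ∀ z : Fin (n-1) → ℝ → ℂ, (∀ i, AP (z i)) →
        AP (fun t => R t (fun i => z i t))) ∧
    (∀ R : ℝ → (Fin (n-1) → ℂ) → ℂ, AAPm (n-1) R →
      ∀ z : Fin (n-1) → ℝ → ℂ, (∀ i, AAP (z i)) →
        AAP (fun t => R t (fun i => z i t))) ∧
    (∀ R : ℝ → (Fin (n-1) → ℂ) → ℂ, AAP0m (n-1) R →
      ∀ z : Fin (n-1) → ℝ → ℂ, (∀ i, AAP0 (z i)) →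
        AAP0 (fun t => R t (fun i => z i t))) :=
  ⟨fun _ hR _ hz => APm.comp hR hz, fun _ hR _ hz => AAPm.comp hR hz,
   fun _ hR _ hz => AAP0m.comp hR hz⟩

end
end

section
/- Let n ≥ 2, let γ_1, …, γ_{n−1} ∈ ℂ be pairwise distinct with Re γ_j ≠ 0 for all j, and let f : ℝ → ℂ be bounded and continuous. Then G[f] is (n−1)-times differentiable and satisfies G[f]^{(i)}(t) = ∑_{j=1}^{n−1} (γ_j^i/Γ_j) G_{γ_j}[f](t) for every 0 ≤ i ≤ n−2 and every t ∈ ℝ, and G[f]^{(n−1)}(t) = ∑_{j=1}^{n−1} (γ_j^{n−1}/Γ_j) G_{γ_j}[f](t) + f(t). Consequently D(G[f]) = f on ℝ, where D is the constant-coefficient linear differential operator of order n−1 whose characteristic polynomial is ∏_{j=1}^{n−1}(x − γ_j). -/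
open MeasureTheory Filter Topology
open scoped ENNReal NNReal

noncomputable section

lemma exp_integrableOn_Iic {b : ℝ} (hb : 0 < b) (c : ℝ) :
    IntegrableOn (fun x => Real.exp (b * x)) (Set.Iic c) := by
  rw [← (Measure.measurePreserving_neg (volume : Measure ℝ)).integrableOn_comp_preimage
      (Homeomorph.neg ℝ).measurableEmbedding]
  simp only [Function.comp_def, Set.neg_preimage, Set.neg_Iic]
  have : IntegrableOn (fun x => Real.exp (-b * x)) (Set.Ici (-c)) := by
    rw [integrableOn_Ici_iff_integrableOn_Ioi]
    exact exp_neg_integrableOn_Ioi _ hb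
  refine this.congr_fun (fun x _ => ?_) measurableSet_Ici
  ring_nf

lemma split_Ioi {g : ℝ → ℂ} {a b : ℝ} (hab : a ≤ b) (hg : IntegrableOn g (Set.Ioi a)) :
    ∫ s in Set.Ioi a, g s = (∫ s in a..b, g s) + ∫ s in Set.Ioi b, g s := by
  rw [intervalIntegral.integral_of_le hab, ← MeasureTheory.setIntegral_union
    (Set.Ioc_disjoint_Ioi le_rfl) measurableSet_Ioi
    (hg.mono_set Set.Ioc_subset_Ioi_self) (hg.mono_set (Set.Ioi_subset_Ioi hab)),
    Set.Ioc_union_Ioi_eq_Ioi hab]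

lemma hasDerivAt_Gop {ω : ℂ} (hw : ω.re ≠ 0) {f : ℝ → ℂ} (hf : BCb f) (t : ℝ) :
    HasDerivAt (Gop ω f) (ω * Gop ω f t + f t) t := by
  obtain ⟨hfc, C, hC⟩ := hf
  set g : ℝ → ℂ := fun s => Complex.exp (-ω * s) * f s with hgdef
  have hgc : Continuous g := by
    exact (Complex.continuous_exp.comp (by continuity)).mul hfc
  have hgb : ∀ s, ‖g s‖ ≤ Real.exp (-ω.re * s) * C := by
    intro s
    have : ‖Complex.exp (-ω * s)‖ = Real.exp (-ω.re * s) := by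
      rw [Complex.norm_exp]
      congr 1; simp [Complex.mul_re]
    rw [norm_mul, this]
    exact mul_le_mul_of_nonneg_left (hC s) (Real.exp_nonneg _)
  have hone : Complex.exp (ω * t) * Complex.exp (-ω * t) = 1 := by
    rw [← Complex.exp_add, show ω * (t:ℂ) + -ω * t = 0 by ring, Complex.exp_zero]
  rcases hw.lt_or_gt with hneg | hpos
  · -- ω.re < 0
    have hsign : Real.sign ω.re = -1 := Real.sign_of_neg hneg
    have hker : ∀ u : ℝ, (fun s => gker ω u s * f s) =
        (Set.Iio u).indicator (fun s => Complex.exp (ω * u) * g s) := by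
      intro u; funext s
      by_cases h : s < u
      · rw [Set.indicator_of_mem (Set.mem_Iio.mpr h), gker,
          if_pos (by rw [hsign]; nlinarith)]
        rw [hsign]
        push_cast
        rw [show ω * ((u:ℂ) - s) = ω * u + -ω * s by ring, Complex.exp_add]
        ring
      · rw [Set.indicator_of_notMem (by simpa using h), gker,
          if_neg (by rw [hsign]; push_neg; nlinarith [not_lt.mp h])]
        simp
    have hgi : ∀ a : ℝ, IntegrableOn g (Set.Iic a) := by
      intro a
      refine Integrable.mono' ((exp_integrableOn_Iic (b := -ω.re) (by linarith) a).mul_const C)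
        hgc.aestronglyMeasurable.restrict (ae_of_all _ fun s => hgb s)
    set H : ℝ → ℂ := fun u => ∫ s in Set.Iic u, g s with hHdef
    have hGop : ∀ u, Gop ω f u = Complex.exp (ω * u) * H u := by
      intro u
      rw [Gop, hker u, MeasureTheory.integral_indicator measurableSet_Iio,
        MeasureTheory.integral_const_mul, hHdef]
      congr 1
      exact setIntegral_congr_set Iio_ae_eq_Iic
    have hH : ∀ u, HasDerivAt H (g u) u := by
      intro u
      have key : ∀ v, H v = H u + ∫ s in u..v, g s := by
        intro v
        rw [← intervalIntegral.integral_Iic_sub_Iic (hgi u) (hgi v)]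
        ring
      have hd : HasDerivAt (fun v => H u + ∫ s in u..v, g s) (g u) u := by
        have := intervalIntegral.integral_hasDerivAt_right
          (hgc.intervalIntegrable u u)
          (hgc.stronglyMeasurableAtFilter volume (𝓝 u)) hgc.continuousAt
        exact this.const_add (H u)
      exact hd.congr_of_eventuallyEq (Filter.Eventually.of_forall key)
    have he : HasDerivAt (fun u : ℝ => Complex.exp (ω * u)) (ω * Complex.exp (ω * t)) t := by
      have h1 : HasDerivAt (fun u : ℝ => (ω * u : ℂ)) ω t := by
        simpa using (Complex.ofRealCLM.hasDerivAt (x := t)).const_mul ω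
      simpa [mul_comm] using h1.cexp
    have hprod := he.mul (hH t)
    have hGfun : Gop ω f = fun u : ℝ => Complex.exp (ω * u) * H u := funext hGop
    rw [hGfun]
    refine hprod.congr_deriv ?_
    have hgt : g t = Complex.exp (-ω * t) * f t := rfl
    rw [hgt]
    linear_combination (f t) * hone
  · -- 0 < ω.re
    have hsign : Real.sign ω.re = 1 := Real.sign_of_pos hpos
    have hker : ∀ u : ℝ, (fun s => gker ω u s * f s) =
        (Set.Ioi u).indicator (fun s => -Complex.exp (ω * u) * g s) := by
      intro u; funext s
      by_cases h : u < s
      · rw [Set.indicator_of_mem (Set.mem_Ioi.mpr h), gker,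
          if_pos (by rw [hsign]; nlinarith)]
        rw [hsign]
        push_cast
        rw [show ω * ((u:ℂ) - s) = ω * u + -ω * s by ring, Complex.exp_add]
        ring
      · rw [Set.indicator_of_notMem (by simpa using h), gker,
          if_neg (by rw [hsign]; push_neg; nlinarith [not_lt.mp h])]
        simp
    have hgi : ∀ a : ℝ, IntegrableOn g (Set.Ioi a) := by
      intro a
      refine Integrable.mono' ((exp_neg_integrableOn_Ioi a hpos).mul_const C)
        hgc.aestronglyMeasurable.restrict (ae_of_all _ fun s => hgb s)
    set H : ℝ → ℂ := fun u => ∫ s in Set.Ioi u, g s with hHdef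
    have hGop : ∀ u, Gop ω f u = -Complex.exp (ω * u) * H u := by
      intro u
      rw [Gop, hker u, MeasureTheory.integral_indicator measurableSet_Ioi,
        MeasureTheory.integral_const_mul, hHdef]
    have hH : ∀ u, HasDerivAt H (-g u) u := by
      intro u
      have key : ∀ v, H v = H u - ∫ s in u..v, g s := by
        intro v
        rcases le_total u v with h | h
        · have := split_Ioi h (hgi u)
          rw [hHdef]; simp only []
          rw [show (∫ s in Set.Ioi v, g s) = (∫ s in Set.Ioi u, g s) - ∫ s in u..v, g s by
            rw [this]; ring]
        · have := split_Ioi h (hgi v)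
          rw [hHdef]; simp only []
          rw [intervalIntegral.integral_symm, this]; ring
      have hd : HasDerivAt (fun v => H u - ∫ s in u..v, g s) (-g u) u := by
        have := intervalIntegral.integral_hasDerivAt_right
          (hgc.intervalIntegrable u u)
          (hgc.stronglyMeasurableAtFilter volume (𝓝 u)) hgc.continuousAt
        exact this.const_sub (H u)
      exact hd.congr_of_eventuallyEq (Filter.Eventually.of_forall key)
    have he : HasDerivAt (fun u : ℝ => Complex.exp (ω * u)) (ω * Complex.exp (ω * t)) t := by
      have h1 : HasDerivAt (fun u : ℝ => (ω * u : ℂ)) ω t := by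
        simpa using (Complex.ofRealCLM.hasDerivAt (x := t)).const_mul ω
      simpa [mul_comm] using h1.cexp
    have hprod := he.neg.mul (hH t)
    have hGfun : Gop ω f = fun u : ℝ => -Complex.exp (ω * u) * H u := funext hGop
    rw [hGfun]
    refine hprod.congr_deriv ?_
    have hgt : g t = Complex.exp (-ω * t) * f t := rfl
    rw [hgt]
    simp only [Pi.neg_apply]
    linear_combination (f t) * hone
lemma basis_coeff {m : ℕ} (γ : Fin m → ℂ) (j : Fin m) :
    (Lagrange.basis Finset.univ γ j).coeff (m-1) = (Gam γ j)⁻¹ := by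
  classical
  rw [Lagrange.basis]
  simp only [Lagrange.basisDivisor]
  rw [Finset.prod_mul_distrib, ← map_prod, Polynomial.coeff_C_mul]
  have hmono : (∏ k ∈ Finset.univ.erase j, (Polynomial.X - Polynomial.C (γ k))).Monic :=
    Polynomial.monic_prod_of_monic _ _ fun k _ => Polynomial.monic_X_sub_C _
  have hdeg : (∏ k ∈ Finset.univ.erase j, (Polynomial.X - Polynomial.C (γ k))).natDegree
      = m - 1 := by
    rw [Polynomial.natDegree_prod _ _ fun k _ => Polynomial.X_sub_C_ne_zero _]
    simp [Polynomial.natDegree_X_sub_C, Finset.card_erase_of_mem, Finset.card_univ]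
  rw [← hdeg, hmono.coeff_natDegree, mul_one, Gam, ← Finset.prod_inv_distrib]

lemma sum_pow_div_Gam {m : ℕ} (γ : Fin m → ℂ) (hinj : Function.Injective γ) {i : ℕ}
    (hi : i < m) : ∑ j, γ j ^ i / Gam γ j = if i = m - 1 then 1 else 0 := by
  classical
  have hdeg : (Polynomial.X ^ i : Polynomial ℂ).degree
      < ((Finset.univ : Finset (Fin m)).card : WithBot ℕ) := by
    rw [Polynomial.degree_X_pow, Finset.card_univ, Fintype.card_fin]
    exact_mod_cast hi
  have h := Lagrange.eq_interpolate (v := γ) (f := (Polynomial.X ^ i : Polynomial ℂ))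
    (Function.Injective.injOn hinj) hdeg
  have hco := congrArg (fun p => Polynomial.coeff p (m-1)) h
  simp only [Lagrange.interpolate_apply, Polynomial.finset_sum_coeff, Polynomial.coeff_C_mul,
    Polynomial.eval_pow, Polynomial.eval_X, Polynomial.coeff_X_pow, basis_coeff] at hco
  rw [show (∑ j, γ j ^ i / Gam γ j) = ∑ j, γ j ^ i * (Gam γ j)⁻¹ by
    simp [div_eq_mul_inv], ← hco]
  by_cases h' : i = m - 1 <;> simp [h', eq_comm]
lemma green_iter {m : ℕ} (hm : 1 ≤ m) (γ : Fin m → ℂ) (hinj : Function.Injective γ)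
    (hre : ∀ j, (γ j).re ≠ 0) {f : ℝ → ℂ} (hf : BCb f) :
    ∀ i, i ≤ m → iteratedDeriv i (GreenOp γ f) = fun t =>
      (∑ j, γ j ^ i / Gam γ j * Gop (γ j) f t) + (if i = m then f t else 0) := by
  intro i
  induction i with
  | zero =>
    intro _
    funext t
    simp only [iteratedDeriv_zero, GreenOp, pow_zero, if_neg (by omega : ¬ (0 = m)), add_zero]
    exact Finset.sum_congr rfl fun j _ => by rw [one_div]
  | succ i IH =>
    intro him
    have hi : i < m := by omega
    rw [iteratedDeriv_succ, IH (le_of_lt hi)]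
    funext t
    have hds : HasDerivAt (fun t => ∑ j, γ j ^ i / Gam γ j * Gop (γ j) f t)
        (∑ j, γ j ^ i / Gam γ j * (γ j * Gop (γ j) f t + f t)) t :=
      HasDerivAt.fun_sum fun j _ => (hasDerivAt_Gop (hre j) hf t).const_mul (γ j ^ i / Gam γ j)
    have hder : deriv (fun t => (∑ j, γ j ^ i / Gam γ j * Gop (γ j) f t)
        + (if i = m then f t else 0)) t
        = ∑ j, γ j ^ i / Gam γ j * (γ j * Gop (γ j) f t + f t) := by
      simp only [if_neg hi.ne, add_zero]
      exact hds.deriv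
    rw [hder]
    simp only [mul_add, Finset.sum_add_distrib, ← Finset.sum_mul]
    congr 1
    · exact Finset.sum_congr rfl fun j _ => by ring
    · rw [sum_pow_div_Gam γ hinj hi]
      by_cases h : i + 1 = m
      · rw [if_pos (show i = m - 1 by omega), if_pos h, one_mul]
      · rw [if_neg (show ¬ i = m - 1 by omega), if_neg h, zero_mul]


/-- Derivatives of the Green operator `G[f]` for bounded continuous `f`,
and the identity `D(G[f]) = f`. -/
theorem stmt9 (n : ℕ) (hn : 2 ≤ n) (γ : Fin (n-1) → ℂ)
    (hinj : Function.Injective γ) (hre : ∀ j, (γ j).re ≠ 0)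
    (f : ℝ → ℂ) (hf : BCb f) :
    (∀ i, i < n - 1 → Differentiable ℝ (iteratedDeriv i (GreenOp γ f))) ∧
    (∀ i, i + 2 ≤ n → ∀ t,
      iteratedDeriv i (GreenOp γ f) t = ∑ j, γ j ^ i / Gam γ j * Gop (γ j) f t) ∧
    (∀ t, iteratedDeriv (n-1) (GreenOp γ f) t =
      (∑ j, γ j ^ (n-1) / Gam γ j * Gop (γ j) f t) + f t) ∧
    (∀ t, Dop γ (GreenOp γ f) t = f t) := by
  have hm : 1 ≤ n - 1 := by omega
  have hiter := green_iter hm γ hinj hre hf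
  have hdiff : ∀ i, i < (n-1) → Differentiable ℝ (iteratedDeriv i (GreenOp γ f)) := by
    intro i hi
    rw [hiter i (le_of_lt hi)]
    simp only [if_neg hi.ne, add_zero]
    exact fun t => (HasDerivAt.fun_sum fun j _ =>
      (hasDerivAt_Gop (hre j) hf t).const_mul (γ j ^ i / Gam γ j)).differentiableAt
  refine ⟨hdiff, ?_, ?_, ?_⟩
  · intro i hi t
    have hi' : i < (n-1) := by omega
    rw [hiter i (le_of_lt hi')]
    simp [if_neg hi'.ne]
  · intro t
    rw [hiter (n-1) le_rfl]
    simp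
  · intro t
    have hcoeff_top : (Dpoly γ).coeff (n-1) = 1 := by
      have hmono : (Dpoly γ).Monic :=
        Polynomial.monic_prod_of_monic _ _ fun k _ => Polynomial.monic_X_sub_C _
      have hdeg : (Dpoly γ).natDegree = (n-1) := by
        rw [Dpoly, Polynomial.natDegree_prod _ _ fun k _ => Polynomial.X_sub_C_ne_zero _]
        simp [Polynomial.natDegree_X_sub_C]
      have h := hmono.coeff_natDegree
      rwa [hdeg] at h
    have heval : ∀ j, Polynomial.eval (γ j) (Dpoly γ) = 0 := fun j => by
      rw [Dpoly, Polynomial.eval_prod]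
      exact Finset.prod_eq_zero (Finset.mem_univ j) (by simp)
    have hdegree : (Dpoly γ).natDegree < (n-1) + 1 := by
      have : (Dpoly γ).natDegree = (n-1) := by
        rw [Dpoly, Polynomial.natDegree_prod _ _ fun k _ => Polynomial.X_sub_C_ne_zero _]
        simp [Polynomial.natDegree_X_sub_C]
      omega
    calc Dop γ (GreenOp γ f) t
        = ∑ k ∈ Finset.range ((n-1)+1), (Dpoly γ).coeff k *
            ((∑ j, γ j ^ k / Gam γ j * Gop (γ j) f t) + if k = (n-1) then f t else 0) := by
          unfold Dop
          refine Finset.sum_congr rfl fun k hk => ?_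
          rw [hiter k (by simpa using Nat.lt_succ_iff.mp (Finset.mem_range.mp hk))]
      _ = (∑ k ∈ Finset.range ((n-1)+1), ∑ j,
            (Dpoly γ).coeff k * (γ j ^ k / Gam γ j) * Gop (γ j) f t) + f t := by
          simp only [mul_add, Finset.sum_add_distrib]
          congr 1
          · refine Finset.sum_congr rfl fun k _ => ?_
            rw [Finset.mul_sum]
            exact Finset.sum_congr rfl fun j _ => by ring
          · simp only [mul_ite, mul_zero, Finset.sum_ite_eq', Finset.mem_range]
            simp [hcoeff_top]
      _ = (∑ j, (Polynomial.eval (γ j) (Dpoly γ)) / Gam γ j * Gop (γ j) f t) + f t := by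
          rw [Finset.sum_comm]
          congr 1
          refine Finset.sum_congr rfl fun j _ => ?_
          rw [← Finset.sum_mul]
          congr 1
          rw [Polynomial.eval_eq_sum_range' hdegree, Finset.sum_div]
          exact Finset.sum_congr rfl fun k _ => by ring
      _ = f t := by simp [heval]


end
end

section
/- Let n ≥ 2, let a_0, …, a_{n−1} ∈ ℂ, let r_0, …, r_{n−1} : ℝ → ℂ be continuous, and let λ be a root of P(a;x) = x^n + ∑_{i=0}^{n−1} a_i x^i. Let z : ℝ → ℂ be (n−1)-times continuously differentiable and set y(t) = exp(∫_0^t (λ + z(s)) ds). Then y is a solution on ℝ of y^{(n)}(t) + ∑_{i=0}^{n−1}(a_i + r_i(t)) y^{(i)}(t) = 0 if and only if z is a solution on ℝ of D z(t) + P(r(t);λ) + L(t,z) + F(t, z, z', …, z^{(n−2)}) = 0. -/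
open MeasureTheory Filter Topology
open scoped ENNReal NNReal

noncomputable section

/-- The nonlinear term written with complete Bell polynomials:
`F(t,z,…) = ∑_{i=2}^n ∑_{j=0}^{n-i} C(i+j,j)(a_{i+j}+r_{i+j}(t))λ^j [B_i(z,…,z^{(i-1)}) - z^{(i-1)}]`. -/
def FtermB (n : ℕ) (a : ℕ → ℂ) (r : ℕ → ℝ → ℂ) (lam : ℂ) (z : ℝ → ℂ) (t : ℝ) : ℂ :=
  ∑ i ∈ Finset.Icc 2 n, ∑ j ∈ Finset.range (n - i + 1),
    (Nat.choose (i+j) j : ℂ) * (a (i+j) + r (i+j) t) * lam ^ j *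
      (Bell i (fun k => iteratedDeriv (k-1) z t) - iteratedDeriv (i-1) z t)

lemma Bell_succ (i : ℕ) (x : ℕ → ℂ) :
    Bell (i+1) x = ∑ j ∈ Finset.range (i+1), (Nat.choose i j : ℂ) * Bell (i - j) x * x (j+1) := by
  conv_lhs => rw [Bell]

lemma choose_sym3 (m l j : ℕ) : m.choose l * (m-l).choose j = m.choose j * (m-j).choose l := by
  rcases le_or_gt (l+j) m with h | h
  · have h1 := Nat.choose_mul (n:=m) (k:=l+j) (s:=j) (Nat.le_add_left _ _)
    have h2 := Nat.choose_mul (n:=m) (k:=l+j) (s:=l) (Nat.le_add_right _ _)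
    rw [(by omega : l + j - j = l)] at h1
    rw [(by omega : l + j - l = j)] at h2
    rw [← h1, ← h2, Nat.choose_symm_add]
  · rcases le_or_gt l m with hl | hl
    · rcases le_or_gt j m with hj | hj
      · rw [Nat.choose_eq_zero_of_lt (by omega : m - l < j),
          Nat.choose_eq_zero_of_lt (by omega : m - j < l)]
        ring
      · rw [Nat.choose_eq_zero_of_lt hj, Nat.choose_eq_zero_of_lt (by omega : m - l < j)]
        ring
    · rw [Nat.choose_eq_zero_of_lt hl, Nat.choose_eq_zero_of_lt (by omega : m - j < l)]
      ring

lemma choose_sym3C (m l j : ℕ) : ((m.choose l : ℂ)) * ((m-l).choose j : ℂ) = (m.choose j : ℂ) * ((m-j).choose l : ℂ) := by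
  rw [← Nat.cast_mul, ← Nat.cast_mul, choose_sym3]

lemma bell_shift (lam : ℂ) (x v : ℕ → ℂ)
    (hv : ∀ k, 1 ≤ k → v k = (if k = 1 then lam else 0) + x k) :
    ∀ m, Bell m v = ∑ j ∈ Finset.range (m+1), (Nat.choose m j : ℂ) * lam ^ j * Bell (m-j) x := by
  intro m
  induction m using Nat.strong_induction_on with
  | _ m ih =>
    match m with
    | 0 => simp [Bell]
    | (m+1) =>
      rw [Bell_succ]
      have step1 : ∀ i ∈ Finset.range (m+1),
          (Nat.choose m i : ℂ) * Bell (m-i) v * v (i+1)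
          = (∑ j ∈ Finset.range (m+1), (Nat.choose m i : ℂ) * ((Nat.choose (m-i) j : ℂ) * lam ^ j * Bell (m-i-j) x) * x (i+1))
            + (if i = 0 then ((Nat.choose m i : ℂ) * Bell (m-i) v * lam) else 0) := by
        intro i hi
        rw [Finset.mem_range] at hi
        have hBi : Bell (m-i) v = ∑ j ∈ Finset.range (m+1), (Nat.choose (m-i) j : ℂ) * lam ^ j * Bell (m-i-j) x := by
          rw [ih (m-i) (by omega)]
          apply Finset.sum_subset
          · intro j hj; rw [Finset.mem_range] at *; omega
          · intro j hj hj'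
            rw [Finset.mem_range] at *
            rw [Nat.choose_eq_zero_of_lt (by omega)]
            push_cast; ring
        rw [hv (i+1) (by omega)]
        rcases Nat.eq_zero_or_pos i with h0 | h0
        · subst h0
          rw [if_pos rfl, if_pos rfl]
          have expand : (Nat.choose m 0 : ℂ) * Bell (m-0) v * x (0+1)
              = ∑ j ∈ Finset.range (m+1), (Nat.choose m 0 : ℂ) * ((Nat.choose (m-0) j : ℂ) * lam ^ j * Bell (m-0-j) x) * x (0+1) := by
            rw [hBi, Finset.mul_sum, Finset.sum_mul]
          rw [← expand]
          ring
        · rw [if_neg (by omega), if_neg (by omega), add_zero, zero_add]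
          conv_lhs => rw [hBi]
          rw [Finset.mul_sum, Finset.sum_mul]
      rw [Finset.sum_congr rfl step1, Finset.sum_add_distrib]
      -- second part: the ite sum
      rw [Finset.sum_ite_eq' (Finset.range (m+1)) 0
        (fun i => (Nat.choose m i : ℂ) * Bell (m-i) v * lam)]
      rw [if_pos (by simp)]
      have hB0 : Bell (m-0) v = ∑ j ∈ Finset.range (m+1), (Nat.choose m j : ℂ) * lam ^ j * Bell (m-j) x := by
        simpa using ih m (by omega)
      rw [hB0]
      -- first part: swap sums
      rw [Finset.sum_comm]
      have swap : ∀ j ∈ Finset.range (m+1),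
          (∑ i ∈ Finset.range (m+1), (Nat.choose m i : ℂ) * ((Nat.choose (m-i) j : ℂ) * lam ^ j * Bell (m-i-j) x) * x (i+1))
          = (Nat.choose m j : ℂ) * lam ^ j * Bell (m+1-j) x := by
        intro j hj
        rw [Finset.mem_range] at hj
        have : ∀ i ∈ Finset.range (m+1),
            (Nat.choose m i : ℂ) * ((Nat.choose (m-i) j : ℂ) * lam ^ j * Bell (m-i-j) x) * x (i+1)
            = (Nat.choose m j : ℂ) * lam ^ j * ((Nat.choose (m-j) i : ℂ) * Bell (m-j-i) x * x (i+1)) := by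
          intro i hi
          have h3 := choose_sym3C m i j
          have hsub : m - i - j = m - j - i := by omega
          rw [hsub]
          calc (Nat.choose m i : ℂ) * ((Nat.choose (m-i) j : ℂ) * lam ^ j * Bell (m-j-i) x) * x (i+1)
              = ((Nat.choose m i : ℂ) * (Nat.choose (m-i) j : ℂ)) * (lam ^ j * Bell (m-j-i) x * x (i+1)) := by ring
            _ = ((Nat.choose m j : ℂ) * (Nat.choose (m-j) i : ℂ)) * (lam ^ j * Bell (m-j-i) x * x (i+1)) := by rw [h3]
            _ = _ := by ring
        rw [Finset.sum_congr rfl this, ← Finset.mul_sum]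
        congr 1
        have : ∑ i ∈ Finset.range (m+1), (Nat.choose (m-j) i : ℂ) * Bell (m-j-i) x * x (i+1)
            = ∑ i ∈ Finset.range (m-j+1), (Nat.choose (m-j) i : ℂ) * Bell (m-j-i) x * x (i+1) := by
          symm
          apply Finset.sum_subset
          · intro i hi; rw [Finset.mem_range] at *; omega
          · intro i hi hi'
            rw [Finset.mem_range] at *
            rw [Nat.choose_eq_zero_of_lt (by omega)]
            push_cast; ring
        rw [this, ← Bell_succ]
        congr 1
        omega
      rw [Finset.sum_congr rfl swap]
      -- now combine
      rw [Finset.sum_range_succ' (fun j => (Nat.choose (m+1) j : ℂ) * lam ^ j * Bell (m+1-j) x) (m+1)]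
      rw [Finset.sum_range_succ' (fun j => (Nat.choose m j : ℂ) * lam ^ j * Bell (m+1-j) x) m]
      have ext : ∑ j ∈ Finset.range m, (Nat.choose m (j+1) : ℂ) * lam ^ (j+1) * Bell (m+1-(j+1)) x
          = ∑ j ∈ Finset.range (m+1), (Nat.choose m (j+1) : ℂ) * lam ^ (j+1) * Bell (m+1-(j+1)) x := by
        apply Finset.sum_subset
        · intro i hi; rw [Finset.mem_range] at *; omega
        · intro i hi hi'
          rw [Finset.mem_range] at *
          rw [Nat.choose_eq_zero_of_lt (by omega)]
          push_cast; ring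
      rw [ext]
      simp only [Nat.choose_zero_right, Nat.cast_one, one_mul, pow_zero, Nat.sub_zero]
      rw [Finset.sum_mul, add_right_comm, ← Finset.sum_add_distrib]
      congr 1
      apply Finset.sum_congr rfl
      intro j hj
      rw [Finset.mem_range] at hj
      have hpas : (Nat.choose (m+1) (j+1) : ℂ) = (Nat.choose m j : ℂ) + (Nat.choose m (j+1) : ℂ) := by
        rw [← Nat.cast_add, Nat.choose_succ_succ]
      have h1 : m + 1 - (j+1) = m - j := by omega
      rw [hpas, h1]
      ring

lemma bell_hasDerivAt (X : ℕ → ℝ → ℂ) : ∀ m, (∀ j, j < m → ∀ s, HasDerivAt (X j) (X (j+1) s) s) → ∀ t,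
    HasDerivAt (fun t => Bell m (fun k => X (k-1) t))
      (∑ l ∈ Finset.range m, (Nat.choose m (l+1) : ℂ) * Bell (m-(l+1)) (fun k => X (k-1) t) * X (l+1) t) t := by
  intro m
  induction m using Nat.strong_induction_on with
  | _ m ih =>
    match m with
    | 0 =>
      intro _ t
      simpa [Bell] using hasDerivAt_const t (1:ℂ)
    | (m+1) =>
      intro hX t
      have hfun : (fun t => Bell (m+1) (fun k => X (k-1) t))
          = fun t => ∑ j ∈ Finset.range (m+1), (Nat.choose m j : ℂ) * Bell (m-j) (fun k => X (k-1) t) * X j t := by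
        funext s
        rw [Bell_succ]
        simp only [Nat.add_sub_cancel]
      rw [hfun]
      have H : HasDerivAt (fun t => ∑ j ∈ Finset.range (m+1), (Nat.choose m j : ℂ) * Bell (m-j) (fun k => X (k-1) t) * X j t)
          (∑ j ∈ Finset.range (m+1),
            (((Nat.choose m j : ℂ) * ∑ l ∈ Finset.range (m-j), (Nat.choose (m-j) (l+1) : ℂ) * Bell (m-j-(l+1)) (fun k => X (k-1) t) * X (l+1) t) * X j t
             + ((Nat.choose m j : ℂ) * Bell (m-j) (fun k => X (k-1) t)) * X (j+1) t)) t := by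
        apply HasDerivAt.fun_sum
        intro j hj
        rw [Finset.mem_range] at hj
        exact (HasDerivAt.const_mul _ (ih (m-j) (by omega) (fun i hi s => hX i (by omega) s) t)).mul (hX j (by omega) t)
      convert H using 1
      rw [Finset.sum_add_distrib]
      -- Pascal on the target
      have hT : ∑ l ∈ Finset.range (m+1), (Nat.choose (m+1) (l+1) : ℂ) * Bell (m+1-(l+1)) (fun k => X (k-1) t) * X (l+1) t
          = (∑ l ∈ Finset.range (m+1), (Nat.choose m (l+1) : ℂ) * Bell (m-l) (fun k => X (k-1) t) * X (l+1) t)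
            + ∑ l ∈ Finset.range (m+1), (Nat.choose m l : ℂ) * Bell (m-l) (fun k => X (k-1) t) * X (l+1) t := by
        rw [← Finset.sum_add_distrib]
        apply Finset.sum_congr rfl
        intro l hl
        have hpas : (Nat.choose (m+1) (l+1) : ℂ) = (Nat.choose m l : ℂ) + (Nat.choose m (l+1) : ℂ) := by
          rw [← Nat.cast_add, Nat.choose_succ_succ]
        have h1 : m + 1 - (l+1) = m - l := by omega
        rw [hpas, h1]
        ring
      rw [hT]
      congr 1
      · -- main part: double sum swap
        have expand : ∀ j ∈ Finset.range (m+1),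
            ((Nat.choose m j : ℂ) * ∑ l ∈ Finset.range (m-j), (Nat.choose (m-j) (l+1) : ℂ) * Bell (m-j-(l+1)) (fun k => X (k-1) t) * X (l+1) t) * X j t
            = ∑ l ∈ Finset.range (m+1), (Nat.choose m (l+1) : ℂ) * ((Nat.choose (m-(l+1)) j : ℂ) * Bell (m-(l+1)-j) (fun k => X (k-1) t) * X j t) * X (l+1) t := by
          intro j hj
          rw [Finset.mem_range] at hj
          have ext : ∑ l ∈ Finset.range (m-j), (Nat.choose (m-j) (l+1) : ℂ) * Bell (m-j-(l+1)) (fun k => X (k-1) t) * X (l+1) t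
              = ∑ l ∈ Finset.range (m+1), (Nat.choose (m-j) (l+1) : ℂ) * Bell (m-j-(l+1)) (fun k => X (k-1) t) * X (l+1) t := by
            apply Finset.sum_subset
            · intro i hi; rw [Finset.mem_range] at *; omega
            · intro i hi hi'
              rw [Finset.mem_range] at *
              rw [Nat.choose_eq_zero_of_lt (by omega)]
              push_cast; ring
          rw [ext, Finset.mul_sum, Finset.sum_mul]
          apply Finset.sum_congr rfl
          intro l hl
          have h3 := choose_sym3C m (l+1) j
          have hsub : m - j - (l+1) = m - (l+1) - j := by omega
          rw [hsub]
          calc (Nat.choose m j : ℂ) * ((Nat.choose (m-j) (l+1) : ℂ) * Bell (m-(l+1)-j) (fun k => X (k-1) t) * X (l+1) t) * X j t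
              = ((Nat.choose m j : ℂ) * (Nat.choose (m-j) (l+1) : ℂ)) * (Bell (m-(l+1)-j) (fun k => X (k-1) t) * X (l+1) t * X j t) := by ring
            _ = ((Nat.choose m (l+1) : ℂ) * (Nat.choose (m-(l+1)) j : ℂ)) * (Bell (m-(l+1)-j) (fun k => X (k-1) t) * X (l+1) t * X j t) := by rw [← h3]
            _ = _ := by ring
        rw [Finset.sum_congr rfl expand, Finset.sum_comm]
        apply Finset.sum_congr rfl
        intro l hl
        rw [Finset.mem_range] at hl
        rcases Nat.lt_or_ge l m with hlm | hlm
        · have shrink : ∑ j ∈ Finset.range (m+1), (Nat.choose m (l+1) : ℂ) * ((Nat.choose (m-(l+1)) j : ℂ) * Bell (m-(l+1)-j) (fun k => X (k-1) t) * X j t) * X (l+1) t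
              = ∑ j ∈ Finset.range (m-(l+1)+1), (Nat.choose m (l+1) : ℂ) * ((Nat.choose (m-(l+1)) j : ℂ) * Bell (m-(l+1)-j) (fun k => X (k-1) t) * X j t) * X (l+1) t := by
            symm
            apply Finset.sum_subset
            · intro i hi; rw [Finset.mem_range] at *; omega
            · intro i hi hi'
              rw [Finset.mem_range] at *
              rw [Nat.choose_eq_zero_of_lt (show m - (l+1) < i by omega)]
              push_cast; ring
          rw [shrink]
          have key : (Nat.choose m (l+1) : ℂ) * Bell (m-(l+1)+1) (fun k => X (k-1) t) * X (l+1) t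
              = ∑ j ∈ Finset.range (m-(l+1)+1), (Nat.choose m (l+1) : ℂ) * ((Nat.choose (m-(l+1)) j : ℂ) * Bell (m-(l+1)-j) (fun k => X (k-1) t) * X j t) * X (l+1) t := by
            rw [Bell_succ]
            simp only [Nat.add_sub_cancel, Finset.mul_sum, Finset.sum_mul]
          rw [← key]
          have h1 : m - (l+1) + 1 = m - l := by omega
          rw [h1]
        · have hz : (Nat.choose m (l+1) : ℂ) = 0 := by
            rw [Nat.choose_eq_zero_of_lt (by omega)]; norm_num
          simp [hz]

lemma shift_sum (N o : ℕ) (f : ℕ → ℂ) (h0 : ∀ m, m < o → f m = 0) :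
    ∑ m ∈ Finset.range N, f m = ∑ i ∈ Finset.range (N - o), f (o + i) := by
  rcases le_or_gt o N with ho | ho
  · have hz : ∑ m ∈ Finset.Ico 0 o, f m = 0 :=
      Finset.sum_eq_zero (fun m hm => h0 m (Finset.mem_Ico.mp hm).2)
    conv_lhs => rw [Finset.range_eq_Ico]
    rw [← Finset.sum_Ico_consecutive _ (Nat.zero_le o) ho, hz, zero_add,
      Finset.sum_Ico_eq_sum_range]
  · have h1 : N - o = 0 := by omega
    rw [h1]
    simp only [Finset.range_zero, Finset.sum_empty]
    exact Finset.sum_eq_zero (fun m hm => h0 m (by rw [Finset.mem_range] at hm; omega))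

lemma triangle_swap (n : ℕ) (f : ℕ → ℕ → ℂ) :
    ∑ m ∈ Finset.range (n+1), ∑ j ∈ Finset.range (m+1), f m j
    = ∑ i ∈ Finset.range (n+1), ∑ j ∈ Finset.range (n+1-i), f (i+j) j := by
  rw [Finset.sum_sigma', Finset.sum_sigma']
  apply Finset.sum_nbij' (fun p => ⟨p.1 - p.2, p.2⟩) (fun p => ⟨p.1 + p.2, p.2⟩)
  · intro p hp
    simp only [Finset.mem_sigma, Finset.mem_range] at *
    omega
  · intro p hp
    simp only [Finset.mem_sigma, Finset.mem_range] at *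
    omega
  · rintro ⟨p1, p2⟩ hp
    simp only [Finset.mem_sigma, Finset.mem_range] at hp
    have h : p1 - p2 + p2 = p1 := by omega
    simp [h]
  · rintro ⟨p1, p2⟩ hp
    simp [Nat.add_sub_cancel]
  · rintro ⟨p1, p2⟩ hp
    simp only [Finset.mem_sigma, Finset.mem_range] at hp
    have h : p1 - p2 + p2 = p1 := by omega
    simp [h]

lemma Bell_one (x : ℕ → ℂ) : Bell 1 x = x 1 := by
  rw [Bell_succ]
  simp [Bell]

lemma iteratedDeriv_lam_add (lam : ℂ) (z : ℝ → ℂ) (k : ℕ) (hk : 1 ≤ k) :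
    iteratedDeriv k (fun s => lam + z s) = iteratedDeriv k z := by
  obtain ⟨j, rfl⟩ : ∃ j, k = j + 1 := ⟨k-1, by omega⟩
  rw [iteratedDeriv_succ', iteratedDeriv_succ']
  have hder : deriv (fun s => lam + z s) = deriv z :=
    funext (fun s => deriv_const_add (f := z) (x := s) lam)
  rw [hder]

lemma iterate_derivative_add' (p q : Polynomial ℂ) (k : ℕ) :
    Polynomial.derivative^[k] (p + q) = Polynomial.derivative^[k] p + Polynomial.derivative^[k] q := by
  induction k with
  | zero => simp
  | succ k ih => simp [Function.iterate_succ_apply', ih]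

lemma eval_iterate_deriv_Pa (n : ℕ) (a : ℕ → ℂ) (han : a n = 1) (lam : ℂ) (j : ℕ) :
    Polynomial.eval lam (Polynomial.derivative^[j] (Pa n a))
    = ∑ i ∈ Finset.range (n+1), a i * (Nat.descFactorial i j : ℂ) * lam ^ (i - j) := by
  rw [Finset.sum_range_succ, han]
  rw [Pa, iterate_derivative_add']
  simp only [Polynomial.iterate_derivative_sum,
    Polynomial.iterate_derivative_C_mul, Polynomial.iterate_derivative_X_pow_eq_natCast_mul,
    Polynomial.eval_add, Polynomial.eval_finset_sum, Polynomial.eval_mul, Polynomial.eval_natCast,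
    Polynomial.eval_pow, Polynomial.eval_X, Polynomial.eval_C]
  rw [add_comm]
  congr 1
  · apply Finset.sum_congr rfl
    intro i hi
    ring
  · ring

lemma coeffA (n o : ℕ) (hon : o ≤ n) (a : ℕ → ℂ) (han : a n = 1) (lam : ℂ) :
    ((Nat.factorial o : ℂ))⁻¹ * Polynomial.eval lam (Polynomial.derivative^[o] (Pa n a))
    = ∑ j ∈ Finset.range (n+1-o), (Nat.choose (o+j) j : ℂ) * lam ^ j * a (o+j) := by
  rw [eval_iterate_deriv_Pa n a han lam o, Finset.mul_sum]
  have hfac : (Nat.factorial o : ℂ) ≠ 0 := by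
    exact_mod_cast Nat.factorial_ne_zero o
  have step : ∀ i ∈ Finset.range (n+1),
      ((Nat.factorial o : ℂ))⁻¹ * (a i * (Nat.descFactorial i o : ℂ) * lam ^ (i - o))
      = (Nat.choose i o : ℂ) * lam ^ (i - o) * a i := by
    intro i hi
    have hd : (Nat.descFactorial i o : ℂ) = (Nat.factorial o : ℂ) * (Nat.choose i o : ℂ) := by
      rw [← Nat.cast_mul, Nat.descFactorial_eq_factorial_mul_choose]
    rw [hd]
    field_simp
  rw [Finset.sum_congr rfl step]
  rw [shift_sum (n+1) o (fun i => (Nat.choose i o : ℂ) * lam ^ (i - o) * a i)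
    (fun m hm => by
      show (Nat.choose m o : ℂ) * lam ^ (m - o) * a m = 0
      rw [Nat.choose_eq_zero_of_lt hm]; push_cast; ring)]
  apply Finset.sum_congr rfl
  intro j hj
  rw [Nat.add_sub_cancel_left, Nat.choose_symm_add]

lemma coeffR (n o : ℕ) (hon : o ≤ n) (r : ℕ → ℝ → ℂ) (hrn : ∀ t, r n t = 0) (lam : ℂ) (t : ℝ) :
    ((Nat.factorial o : ℂ))⁻¹ * PrlD n o r lam t
    = ∑ j ∈ Finset.range (n+1-o), (Nat.choose (o+j) j : ℂ) * lam ^ j * r (o+j) t := by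
  have hfac : (Nat.factorial o : ℂ) ≠ 0 := by
    exact_mod_cast Nat.factorial_ne_zero o
  rw [PrlD, ← mul_assoc, inv_mul_cancel₀ hfac, one_mul]
  have ext : ∑ i ∈ Finset.range n, (Nat.choose i o : ℂ) * lam ^ (i - o) * r i t
      = ∑ i ∈ Finset.range (n+1), (Nat.choose i o : ℂ) * lam ^ (i - o) * r i t := by
    rw [Finset.sum_range_succ, hrn t, mul_zero, add_zero]
  rw [ext, shift_sum (n+1) o (fun i => (Nat.choose i o : ℂ) * lam ^ (i - o) * r i t)
    (fun m hm => by
      show (Nat.choose m o : ℂ) * lam ^ (m - o) * r m t = 0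
      rw [Nat.choose_eq_zero_of_lt hm]; push_cast; ring)]
  apply Finset.sum_congr rfl
  intro j hj
  rw [Nat.add_sub_cancel_left, Nat.choose_symm_add]

lemma sum_Icc1 (n : ℕ) (f : ℕ → ℂ) : ∑ o ∈ Finset.Icc 1 n, f o = ∑ i ∈ Finset.range n, f (i+1) := by
  apply Finset.sum_nbij' (fun o => o - 1) (fun i => i + 1)
  · intro o ho
    simp only [Finset.mem_Icc, Finset.mem_range] at *
    omega
  · intro i hi
    simp only [Finset.mem_Icc, Finset.mem_range] at *
    omega
  · intro o ho
    simp only [Finset.mem_Icc] at ho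
    omega
  · intro i hi
    omega
  · intro o ho
    simp only [Finset.mem_Icc] at ho
    have h : o - 1 + 1 = o := by omega
    rw [h]

lemma alg_id (n : ℕ) (hn : 2 ≤ n) (a : ℕ → ℂ) (r : ℕ → ℝ → ℂ) (han : a n = 1) (hrn : ∀ t, r n t = 0)
    (lam : ℂ) (hlam : Polynomial.eval lam (Pa n a) = 0) (z : ℝ → ℂ) (t : ℝ) :
    ∑ m ∈ Finset.range (n+1), (a m + r m t) * Bell m (fun k => iteratedDeriv (k-1) (fun s => lam + z s) t)
    = DopP n a lam z t + Prl n r lam t + Lterm n r lam z t + FtermB n a r lam z t := by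
  have hshift : ∀ m, Bell m (fun k => iteratedDeriv (k-1) (fun s => lam + z s) t)
      = ∑ j ∈ Finset.range (m+1), (Nat.choose m j : ℂ) * lam ^ j * Bell (m-j) (fun k => iteratedDeriv (k-1) z t) := by
    intro m
    apply bell_shift
    intro k hk
    rcases eq_or_lt_of_le hk with h1 | h1
    · rw [← h1]
      simp only [if_pos rfl]
      norm_num [iteratedDeriv_zero]
    · rw [if_neg (by omega), zero_add, iteratedDeriv_lam_add lam z (k-1) (by omega)]
  have step1 : ∑ m ∈ Finset.range (n+1), (a m + r m t) * Bell m (fun k => iteratedDeriv (k-1) (fun s => lam + z s) t)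
      = ∑ i ∈ Finset.range (n+1), ∑ j ∈ Finset.range (n+1-i),
        (Nat.choose (i+j) j : ℂ) * lam ^ j * ((a (i+j) + r (i+j) t) * Bell i (fun k => iteratedDeriv (k-1) z t)) := by
    have e1 : ∀ m ∈ Finset.range (n+1), (a m + r m t) * Bell m (fun k => iteratedDeriv (k-1) (fun s => lam + z s) t)
        = ∑ j ∈ Finset.range (m+1), (a m + r m t) * ((Nat.choose m j : ℂ) * lam ^ j * Bell (m-j) (fun k => iteratedDeriv (k-1) z t)) := by
      intro m hm
      rw [hshift m, Finset.mul_sum]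
    rw [Finset.sum_congr rfl e1, triangle_swap]
    apply Finset.sum_congr rfl
    intro i hi
    apply Finset.sum_congr rfl
    intro j hj
    rw [Nat.add_sub_cancel]
    ring
  rw [step1, Finset.sum_range_succ' _ n]
  -- compute the i = 0 term
  have hg0 : ∑ j ∈ Finset.range (n+1-0), (Nat.choose (0+j) j : ℂ) * lam ^ j *
      ((a (0+j) + r (0+j) t) * Bell 0 (fun k => iteratedDeriv (k-1) z t)) = Prl n r lam t := by
    have e : ∀ j ∈ Finset.range (n+1), (Nat.choose (0+j) j : ℂ) * lam ^ j *
        ((a (0+j) + r (0+j) t) * Bell 0 (fun k => iteratedDeriv (k-1) z t))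
        = lam ^ j * a j + lam ^ j * r j t := by
      intro j hj
      simp only [Nat.zero_add, Nat.choose_self, Nat.cast_one, Bell]
      ring
    rw [Nat.sub_zero, Finset.sum_congr rfl e, Finset.sum_add_distrib]
    have heval : lam ^ n + ∑ j ∈ Finset.range n, a j * lam ^ j = 0 := by
      have : Polynomial.eval lam (Pa n a) = lam ^ n + ∑ j ∈ Finset.range n, a j * lam ^ j := by
        simp [Pa, Polynomial.eval_finset_sum]
      rw [← this, hlam]
    have h1 : ∑ j ∈ Finset.range (n+1), lam ^ j * a j = 0 := by
      rw [Finset.sum_range_succ, han, mul_one]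
      rw [← heval]
      rw [add_comm]
      congr 1
      apply Finset.sum_congr rfl
      intro j hj
      ring
    have h2 : ∑ j ∈ Finset.range (n+1), lam ^ j * r j t = Prl n r lam t := by
      rw [Finset.sum_range_succ, hrn t, mul_zero, add_zero, Prl]
    rw [h1, h2, zero_add]
  rw [hg0]
  -- rewrite DopP
  have hD : DopP n a lam z t = ∑ i ∈ Finset.range n,
      (∑ j ∈ Finset.range (n+1-(i+1)), (Nat.choose (i+1+j) j : ℂ) * lam ^ j * a (i+1+j)) * iteratedDeriv i z t := by
    rw [DopP, sum_Icc1]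
    apply Finset.sum_congr rfl
    intro i hi
    rw [Finset.mem_range] at hi
    rw [Nat.add_sub_cancel, ← coeffA n (i+1) (by omega) a han lam]
  -- rewrite Lterm
  have hL : Lterm n r lam z t = ∑ i ∈ Finset.range n,
      (∑ j ∈ Finset.range (n+1-(i+1)), (Nat.choose (i+1+j) j : ℂ) * lam ^ j * r (i+1+j) t) * iteratedDeriv i z t := by
    have hIcc : Finset.Icc 1 n = Finset.Icc 1 ((n-1)+1) := by congr 1; omega
    have hzn : ((Nat.factorial ((n-1)+1) : ℂ))⁻¹ * PrlD n ((n-1)+1) r lam t * iteratedDeriv ((n-1)+1-1) z t = 0 := by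
      have : PrlD n ((n-1)+1) r lam t = 0 := by
        rw [PrlD]
        have : ∀ i ∈ Finset.range n, (Nat.choose i ((n-1)+1) : ℂ) * lam ^ (i - ((n-1)+1)) * r i t = 0 := by
          intro i hi
          rw [Finset.mem_range] at hi
          rw [Nat.choose_eq_zero_of_lt (by omega)]
          push_cast; ring
        rw [Finset.sum_congr rfl this, Finset.sum_const_zero, mul_zero]
      rw [this]
      ring
    have hins : Finset.Icc 1 n = insert n (Finset.Icc 1 (n-1)) := by
      ext x
      simp only [Finset.mem_Icc, Finset.mem_insert]
      omega
    have hext : Lterm n r lam z t = ∑ k ∈ Finset.Icc 1 n,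
        ((Nat.factorial k : ℂ))⁻¹ * PrlD n k r lam t * iteratedDeriv (k-1) z t := by
      rw [show ((n-1):ℕ)+1 = n from by omega] at hzn
      rw [Lterm, hins, Finset.sum_insert (by simp only [Finset.mem_Icc]; omega), hzn, zero_add]
    rw [hext, sum_Icc1]
    apply Finset.sum_congr rfl
    intro i hi
    rw [Finset.mem_range] at hi
    rw [Nat.add_sub_cancel, ← coeffR n (i+1) (by omega) r hrn lam t]
  -- rewrite FtermB
  have hF : FtermB n a r lam z t = ∑ i ∈ Finset.range n,
      (∑ j ∈ Finset.range (n+1-(i+1)), (Nat.choose (i+1+j) j : ℂ) * lam ^ j * (a (i+1+j) + r (i+1+j) t))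
        * (Bell (i+1) (fun k => iteratedDeriv (k-1) z t) - iteratedDeriv i z t) := by
    have hins : Finset.Icc 1 n = insert 1 (Finset.Icc 2 n) := by
      ext x
      simp only [Finset.mem_Icc, Finset.mem_insert]
      omega
    have h1zero : ∑ j ∈ Finset.range (n - 1 + 1),
        (Nat.choose (1+j) j : ℂ) * (a (1+j) + r (1+j) t) * lam ^ j *
          (Bell 1 (fun k => iteratedDeriv (k-1) z t) - iteratedDeriv (1-1) z t) = 0 := by
      have : Bell 1 (fun k => iteratedDeriv (k-1) z t) - iteratedDeriv (1-1) z t = 0 := by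
        rw [Bell_one]
        simp
      rw [this]
      simp
    have hext : FtermB n a r lam z t = ∑ i ∈ Finset.Icc 1 n, ∑ j ∈ Finset.range (n - i + 1),
        (Nat.choose (i+j) j : ℂ) * (a (i+j) + r (i+j) t) * lam ^ j *
          (Bell i (fun k => iteratedDeriv (k-1) z t) - iteratedDeriv (i-1) z t) := by
      rw [FtermB, hins, Finset.sum_insert (by simp), h1zero, zero_add]
    rw [hext, sum_Icc1]
    apply Finset.sum_congr rfl
    intro i hi
    rw [Finset.mem_range] at hi
    rw [Nat.add_sub_cancel]
    rw [show n - (i+1) + 1 = n+1-(i+1) from by omega]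
    rw [Finset.sum_mul]
    apply Finset.sum_congr rfl
    intro j hj
    ring
  rw [hD, hL, hF]
  have final : ∀ i ∈ Finset.range n,
      ∑ j ∈ Finset.range (n+1-(i+1)), (Nat.choose (i+1+j) j : ℂ) * lam ^ j *
        ((a (i+1+j) + r (i+1+j) t) * Bell (i+1) (fun k => iteratedDeriv (k-1) z t))
      = ((∑ j ∈ Finset.range (n+1-(i+1)), (Nat.choose (i+1+j) j : ℂ) * lam ^ j * a (i+1+j)) * iteratedDeriv i z t
          + (∑ j ∈ Finset.range (n+1-(i+1)), (Nat.choose (i+1+j) j : ℂ) * lam ^ j * r (i+1+j) t) * iteratedDeriv i z t)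
          + (∑ j ∈ Finset.range (n+1-(i+1)), (Nat.choose (i+1+j) j : ℂ) * lam ^ j * (a (i+1+j) + r (i+1+j) t))
            * (Bell (i+1) (fun k => iteratedDeriv (k-1) z t) - iteratedDeriv i z t) := by
    intro i hi
    rw [Finset.sum_mul, Finset.sum_mul, Finset.sum_mul, ← Finset.sum_add_distrib, ← Finset.sum_add_distrib]
    apply Finset.sum_congr rfl
    intro j hj
    ring
  rw [Finset.sum_congr rfl final, Finset.sum_add_distrib, Finset.sum_add_distrib]
  ring

lemma rep_lemma (n : ℕ) (hn : 2 ≤ n) (z : ℝ → ℂ) (hz : ContDiff ℝ ((n - 1 : ℕ) : ℕ∞) z) (lam : ℂ)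
    (y : ℝ → ℂ) (hy : ∀ t, y t = Complex.exp (∫ s in (0:ℝ)..t, (lam + z s))) :
    ∀ m, m ≤ n → ∀ t, iteratedDeriv m y t
      = Bell m (fun k => iteratedDeriv (k-1) (fun s => lam + z s) t) * y t := by
  set w : ℝ → ℂ := fun s => lam + z s with hw_def
  have hw : ContDiff ℝ ((n - 1 : ℕ) : ℕ∞) w := contDiff_const.add hz
  have hcw : Continuous w := hw.continuous
  have hX : ∀ j, j < n - 1 → ∀ s, HasDerivAt (iteratedDeriv j w) (iteratedDeriv (j+1) w s) s := by
    intro j hj s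
    rw [iteratedDeriv_succ]
    exact ((hw.differentiable_iteratedDeriv j (by exact_mod_cast hj)) s).hasDerivAt
  have hydef : y = fun t => Complex.exp (∫ s in (0:ℝ)..t, w s) := funext hy
  have hyd : ∀ t, HasDerivAt y (iteratedDeriv 0 w t * y t) t := by
    intro t
    have h1 : HasDerivAt (fun u => ∫ s in (0:ℝ)..u, w s) (w t) t :=
      (hcw.integral_hasStrictDerivAt 0 t).hasDerivAt
    have h2 := h1.cexp
    rw [hydef]
    simp only [iteratedDeriv_zero]
    simpa [mul_comm] using h2
  intro m
  induction m with
  | zero => intro _ t; simp [Bell]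
  | succ m ih =>
    intro hm t
    rw [iteratedDeriv_succ]
    have hrep : iteratedDeriv m y = fun s => Bell m (fun k => iteratedDeriv (k-1) w s) * y s :=
      funext (fun s => ih (by omega) s)
    rw [hrep]
    have hBd := bell_hasDerivAt (fun j => iteratedDeriv j w) m (fun j hj s => hX j (by omega) s) t
    have hprod := hBd.fun_mul (hyd t)
    rw [hprod.deriv]
    rw [Bell_succ]
    simp only [Nat.add_sub_cancel]
    rw [Finset.sum_range_succ' (fun j => (Nat.choose m j : ℂ) * Bell (m-j) (fun k => iteratedDeriv (k-1) w t) * iteratedDeriv j w t) m]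
    simp only [Nat.choose_zero_right, Nat.cast_one, one_mul, Nat.sub_zero]
    rw [add_mul, Finset.sum_mul]
    ring

/-- `y = exp(∫_0^t (λ + z))` solves the perturbed linear equation iff `z`
solves the Riccati-type equation `Dz + P(r;λ) + L(t,z) + F(t,z,…,z^{(n-2)}) = 0`. -/
theorem stmt11 (n : ℕ) (hn : 2 ≤ n) (a : ℕ → ℂ) (r : ℕ → ℝ → ℂ)
    (hrc : ∀ i, Continuous (r i)) (han : a n = 1) (hrn : ∀ t, r n t = 0)
    (lam : ℂ) (hlam : Polynomial.eval lam (Pa n a) = 0)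
    (z : ℝ → ℂ) (hz : ContDiff ℝ ((n - 1 : ℕ) : ℕ∞) z)
    (y : ℝ → ℂ) (hy : ∀ t, y t = Complex.exp (∫ s in (0:ℝ)..t, (lam + z s))) :
    (∀ t, iteratedDeriv n y t +
        ∑ i ∈ Finset.range n, (a i + r i t) * iteratedDeriv i y t = 0) ↔
    (∀ t, DopP n a lam z t + Prl n r lam t + Lterm n r lam z t + FtermB n a r lam z t = 0) := by
  have rep := rep_lemma n hn z hz lam y hy
  apply forall_congr'
  intro t
  have hyne : y t ≠ 0 := by rw [hy t]; exact Complex.exp_ne_zero _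
  have h1 : ∀ i ∈ Finset.range n, (a i + r i t) * iteratedDeriv i y t
      = (a i + r i t) * Bell i (fun k => iteratedDeriv (k-1) (fun s => lam + z s) t) * y t := by
    intro i hi
    rw [Finset.mem_range] at hi
    rw [rep i (by omega) t]
    ring
  have hmain : iteratedDeriv n y t + ∑ i ∈ Finset.range n, (a i + r i t) * iteratedDeriv i y t
      = (DopP n a lam z t + Prl n r lam t + Lterm n r lam z t + FtermB n a r lam z t) * y t := by
    calc iteratedDeriv n y t + ∑ i ∈ Finset.range n, (a i + r i t) * iteratedDeriv i y t
        = ∑ i ∈ Finset.range n, (a i + r i t) * Bell i (fun k => iteratedDeriv (k-1) (fun s => lam + z s) t) * y t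
          + (a n + r n t) * Bell n (fun k => iteratedDeriv (k-1) (fun s => lam + z s) t) * y t := by
          rw [rep n le_rfl t, Finset.sum_congr rfl h1, han, hrn t]
          ring
      _ = (∑ m ∈ Finset.range (n+1), (a m + r m t) * Bell m (fun k => iteratedDeriv (k-1) (fun s => lam + z s) t)) * y t := by
          conv_rhs => rw [Finset.sum_range_succ, add_mul, Finset.sum_mul]
      _ = (DopP n a lam z t + Prl n r lam t + Lterm n r lam z t + FtermB n a r lam z t) * y t := by
          rw [alg_id n hn a r han hrn lam hlam z t]
  rw [hmain, mul_eq_zero]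
  simp [hyne]

end
end
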